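/- arXiv:1103.5654 — 6 statements merged into one kernel-verified Lean document; each statement's English description precedes it below -/
import Mathlib

section
/- If the edge set of a 3-partite 3-uniform hypergraph H' forms an intersecting family (every two edges share a vertex), then the minimum vertex degree δ_1(H') is at most 1. -/
def deg3 {n : ℕ} (H : Finset (Fin 3 → Fin n)) (c : Fin 3) (x : Fin n) : ℕ :=
  (H.filter (fun e => e c = x)).card

private lemma tri3 : ∀ (j k i : Fin 3), j ≠ 0 → k ≠ 0 → j ≠ k →
    (i = 0 ∨ i = j ∨ i = k) := by decide

/-- pick an element of `Fin n` avoiding two values -/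
private lemma avoid2 {n : ℕ} (hn : 5 ≤ n) (a b : Fin n) :
    ∃ x : Fin n, x ≠ a ∧ x ≠ b := by
  have h1 : ((Finset.univ : Finset (Fin n)) \ {a, b}).Nonempty := by
    rw [← Finset.card_pos, Finset.card_sdiff_of_subset (Finset.subset_univ _), Finset.card_univ,
      Fintype.card_fin]
    have : ({a, b} : Finset (Fin n)).card ≤ 2 :=
      (Finset.card_insert_le _ _).trans (by simp)
    omega
  obtain ⟨x, hx⟩ := h1
  simp only [Finset.mem_sdiff, Finset.mem_insert, Finset.mem_singleton] at hx
  exact ⟨x, fun h => hx.2 (Or.inl h), fun h => hx.2 (Or.inr h)⟩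

/-- Main auxiliary lemma: if every vertex has degree ≥ 2 and there is a system of edges
`E x` through each class-0 vertex `x` all sharing the class-`j` vertex `v`, contradiction. -/
private lemma aux {n : ℕ} (hn : 5 ≤ n) (H : Finset (Fin 3 → Fin n))
    (hint : ∀ e ∈ H, ∀ f ∈ H, ∃ i, e i = f i)
    (j k : Fin 3) (hj : j ≠ 0) (hk : k ≠ 0) (hjk : j ≠ k)
    (E : Fin n → Fin 3 → Fin n) (hEH : ∀ x, E x ∈ H) (hE0 : ∀ x, E x 0 = x)
    (v : Fin n) (hEv : ∀ x, E x j = v)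
    (hdeg : ∀ c x, 1 < deg3 H c x) : False := by
  have hmeet : ∀ e ∈ H, ∀ f ∈ H, e 0 = f 0 ∨ e j = f j ∨ e k = f k := by
    intro e he f hf
    obtain ⟨i, hi⟩ := hint e he f hf
    rcases tri3 j k i hj hk hjk with h | h | h <;> subst h <;> tauto
  -- edges through every vertex
  have hex : ∀ (c : Fin 3) (x : Fin n), ∃ e ∈ H, e c = x := by
    intro c x
    have h2 := hdeg c x
    have h3 : 0 < (H.filter (fun e => e c = x)).card := by simp only [deg3] at h2; exact lt_trans zero_lt_one h2
    obtain ⟨e, he⟩ := Finset.card_pos.mp h3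
    exact ⟨e, (Finset.mem_filter.mp he).1, (Finset.mem_filter.mp he).2⟩
  by_cases hB : ∃ h ∈ H, h j ≠ v
  · obtain ⟨h, hhH, hhj⟩ := hB
    set z0 := h 0 with hz0
    set w := h k with hw
    -- core edges
    have hcore : ∀ x : Fin n, x ≠ z0 → E x k = w := by
      intro x hx
      rcases hmeet (E x) (hEH x) h hhH with h0 | h1 | h2
      · exact absurd (by rw [hE0] at h0; exact h0) hx
      · exact absurd (by rw [hEv] at h1; exact h1.symm) hhj
      · exact h2
    -- every edge avoiding v in class j has w in class k
    have hC1 : ∀ g ∈ H, g j ≠ v → g k = w := by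
      intro g hg hgj
      obtain ⟨x1, hx1a, hx1b⟩ := avoid2 hn z0 (g 0)
      rcases hmeet g hg (E x1) (hEH x1) with h0 | h1 | h2
      · rw [hE0] at h0; exact absurd h0.symm hx1b
      · rw [hEv] at h1; exact absurd h1 hgj
      · rw [hcore x1 hx1a] at h2; exact h2
    by_cases hB0 : ∀ g ∈ H, g j ≠ v → g 0 = z0
    · -- all non-star edges through z0 in class 0: some class-0 vertex has degree ≤ 1
      obtain ⟨x, hxa, -⟩ := avoid2 hn z0 z0
      have hdet : ∀ g ∈ H, g 0 = x → ∀ i : Fin 3, g i = if i = 0 then x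
          else if i = j then v else w := by
        intro g hg hg0 i
        have hgj : g j = v := by
          by_contra hc
          exact hxa (hg0 ▸ hB0 g hg hc)
        have hgk : g k = w := by
          rcases hmeet g hg h hhH with h0 | h1 | h2
          · exact absurd (hg0 ▸ h0) hxa
          · exact absurd (hgj ▸ h1.symm) hhj
          · exact h2
        rcases tri3 j k i hj hk hjk with hi | hi | hi <;> subst hi
        · simpa using hg0
        · simp only [if_neg hj, if_pos rfl]; exact hgj
        · rw [if_neg hk, if_neg (Ne.symm hjk)]; exact hgk
      have hle : deg3 H 0 x ≤ 1 := by
        apply Finset.card_le_one.mpr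
        intro a ha b hb
        simp only [Finset.mem_filter] at ha hb
        funext i
        rw [hdet a ha.1 ha.2 i, hdet b hb.1 hb.2 i]
      have := hdeg 0 x; omega
    · -- two non-star edges with distinct class-0 vertices: some class-k vertex has degree 0
      push_neg at hB0
      obtain ⟨h2, hh2H, hh2j, hh2z⟩ := hB0
      obtain ⟨w', hw'a, -⟩ := avoid2 hn w w
      have hempty : ∀ g ∈ H, g k ≠ w' := by
        intro g hg hgk
        have hgj : g j = v := by
          by_contra hc
          exact hw'a (hgk ▸ hC1 g hg hc)
        have h1 : g 0 = z0 := by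
          rcases hmeet g hg h hhH with h0 | ha | hb
          · exact h0
          · exact absurd (hgj ▸ ha.symm) hhj
          · rw [hgk] at hb; exact absurd hb hw'a
        have h2' : g 0 = h2 0 := by
          rcases hmeet g hg h2 hh2H with h0 | ha | hb
          · exact h0
          · exact absurd (hgj ▸ ha.symm) hh2j
          · rw [hC1 h2 hh2H hh2j, hgk] at hb
            exact absurd hb hw'a
        exact hh2z (h2'.symm.trans h1)
      obtain ⟨g, hg, hgk⟩ := hex k w'
      exact hempty g hg hgk
  · -- all edges through v in class j: a different class-j vertex has degree 0
    push_neg at hB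
    obtain ⟨u, hua, -⟩ := avoid2 hn v v
    obtain ⟨g, hg, hgj⟩ := hex j u
    exact hua (hgj ▸ hB g hg)

/-- If the edge set of a 3-partite 3-graph is an intersecting family, then the minimum
vertex degree is at most 1, i.e. some vertex lies in at most one edge. -/
theorem min_degree_of_intersecting {n : ℕ} (hn : 5 ≤ n)
    (H : Finset (Fin 3 → Fin n))
    (hint : ∀ e ∈ H, ∀ f ∈ H, ∃ i, e i = f i) :
    ∃ (c : Fin 3) (x : Fin n), deg3 H c x ≤ 1 := by
  by_contra hcon
  push_neg at hcon
  have hdeg : ∀ c x, 1 < deg3 H c x := hcon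
  have hex : ∀ x : Fin n, ∃ e ∈ H, e 0 = x := by
    intro x
    have h2 := hdeg 0 x
    have h3 : 0 < (H.filter (fun e => e 0 = x)).card := by simp only [deg3] at h2; exact lt_trans zero_lt_one h2
    obtain ⟨e, he⟩ := Finset.card_pos.mp h3
    exact ⟨e, (Finset.mem_filter.mp he).1, (Finset.mem_filter.mp he).2⟩
  choose E hEH hE0 using hex
  have hmeet : ∀ e ∈ H, ∀ f ∈ H, e 0 = f 0 ∨ e 1 = f 1 ∨ e 2 = f 2 := by
    intro e he f hf
    obtain ⟨i, hi⟩ := hint e he f hf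
    fin_cases i <;> tauto
  by_cases hall : ∀ x y : Fin n, E x 1 = E y 1
  · exact aux hn H hint 1 2 (by decide) (by decide) (by decide) E hEH hE0 (E ⟨0, by omega⟩ 1)
      (fun x => hall x ⟨0, by omega⟩) hdeg
  · push_neg at hall
    obtain ⟨x, y, hxy1⟩ := hall
    have hxy : x ≠ y := fun h => hxy1 (h ▸ rfl)
    have hxy2 : E x 2 = E y 2 := by
      rcases hmeet (E x) (hEH x) (E y) (hEH y) with h0 | h1 | h2
      · rw [hE0, hE0] at h0; exact absurd h0 hxy
      · exact absurd h1 hxy1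
      · exact h2
    have hconst : ∀ z : Fin n, E z 2 = E x 2 := by
      intro z
      by_cases hzx : z = x
      · rw [hzx]
      by_cases hzy : z = y
      · rw [hzy, hxy2]
      by_contra hc
      have h1 : E z 1 = E x 1 := by
        rcases hmeet (E z) (hEH z) (E x) (hEH x) with h0 | h1 | h2
        · rw [hE0, hE0] at h0; exact absurd h0 hzx
        · exact h1
        · exact absurd h2 hc
      have h2 : E z 1 = E y 1 := by
        rcases hmeet (E z) (hEH z) (E y) (hEH y) with h0 | h1 | h2
        · rw [hE0, hE0] at h0; exact absurd h0 hzy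
        · exact h1
        · rw [← hxy2] at h2; exact absurd h2 hc
      exact hxy1 (h1 ▸ h2)
    exact aux hn H hint 2 1 (by decide) (by decide) (by decide) E hEH hE0 (E x 2)
      hconst hdeg
end

section
/- For integers k ≥ 2 and d_1,...,d_k with 0 ≤ d_i ≤ n, the k-partite k-graph H(n; d_1,...,d_k) contains a matching of size min{n, d_1 + d_2 + ... + d_k}. -/
/-- `H(n; d_1,…,d_k)`: the `k`-partite `k`-graph (edges encoded as functions
`Fin k → Fin n`, one vertex per class) whose edges are the legal `k`-sets meeting
`W = W_1 ∪ ⋯ ∪ W_k`, where `W_i` consists of the first `d i` vertices of class `i`. -/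
def Hnd (k n : ℕ) (d : Fin k → ℕ) : Finset (Fin k → Fin n) :=
  Finset.univ.filter (fun e => ∃ i : Fin k, (e i : ℕ) < d i)

private lemma prefix_sum_locate (f : ℕ → ℕ) :
    ∀ (m j : ℕ), j < ∑ i ∈ Finset.range m, f i →
      ∃ t < m, (∑ i ∈ Finset.range t, f i) ≤ j ∧ j < (∑ i ∈ Finset.range t, f i) + f t := by
  intro m
  induction m with
  | zero => intro j h; simp at h
  | succ m ih =>
    intro j h
    by_cases hj : j < ∑ i ∈ Finset.range m, f i
    · obtain ⟨t, ht, h1, h2⟩ := ih j hj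
      exact ⟨t, Nat.lt_succ_of_lt ht, h1, h2⟩
    · refine ⟨m, Nat.lt_succ_self m, Nat.le_of_not_lt hj, ?_⟩
      rwa [Finset.sum_range_succ] at h

/-- For `k ≥ 2` and `0 ≤ d_i ≤ n`, the graph `H(n; d_1,…,d_k)` contains a matching of
size `min {n, d_1 + ⋯ + d_k}`. -/
theorem Hnd_matching (k n : ℕ) (d : Fin k → ℕ) (hk : 2 ≤ k) (hd : ∀ i, d i ≤ n) :
    ∃ M : Finset (Fin k → Fin n), M ⊆ Hnd k n d ∧
      (∀ e ∈ M, ∀ f ∈ M, e ≠ f → ∀ i, e i ≠ f i) ∧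
      M.card = min n (∑ i, d i) := by
  rcases Nat.eq_zero_or_pos n with hn | hn
  · subst hn
    exact ⟨∅, by simp, by simp, by simp⟩
  set d' : ℕ → ℕ := fun t => if h : t < k then d ⟨t, h⟩ else 0 with hd'
  set D : ℕ → ℕ := fun t => ∑ i ∈ Finset.range t, d' i with hD
  set m := min n (∑ i, d i) with hm
  have hmn : m ≤ n := min_le_left _ _
  have hms : m ≤ ∑ i, d i := min_le_right _ _
  have hsum : D k = ∑ i, d i := by
    show (∑ i ∈ Finset.range k, d' i) = ∑ i, d i
    rw [← Fin.sum_univ_eq_sum_range]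
    exact Finset.sum_congr rfl fun i _ => by simp [hd']
  set e : ℕ → Fin k → Fin n := fun j i => ⟨(j + (n - D i % n)) % n, Nat.mod_lt _ hn⟩ with he
  -- evaluation when D t ≤ j < n
  have heval : ∀ j : ℕ, j < n → ∀ t : ℕ, D t ≤ j →
      (j + (n - D t % n)) % n = j - D t := by
    intro j hj t ht
    have h1 : D t < n := lt_of_le_of_lt ht hj
    rw [Nat.mod_eq_of_lt h1]
    have h2 : j + (n - D t) = (j - D t) + n := by omega
    rw [h2, Nat.add_mod_right, Nat.mod_eq_of_lt (by omega)]
  -- injectivity in j at any coordinate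
  have hinj : ∀ j1 j2 : ℕ, j1 < n → j2 < n → ∀ i : Fin k, e j1 i = e j2 i → j1 = j2 := by
    intro j1 j2 h1 h2 i hij
    have hval : (j1 + (n - D i % n)) % n = (j2 + (n - D i % n)) % n :=
      congrArg Fin.val hij
    have hmod : j1 ≡ j2 [MOD n] := Nat.ModEq.add_right_cancel' _ hval
    have := hmod
    unfold Nat.ModEq at this
    rwa [Nat.mod_eq_of_lt h1, Nat.mod_eq_of_lt h2] at this
  -- each e j is an edge
  have hedge : ∀ j : ℕ, j < m → e j ∈ Hnd k n d := by
    intro j hj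
    have hjn : j < n := lt_of_lt_of_le hj hmn
    have hjs : j < D k := by rw [hsum]; exact lt_of_lt_of_le hj hms
    obtain ⟨t, htk, hle, hlt⟩ := prefix_sum_locate d' k j hjs
    refine Finset.mem_filter.mpr ⟨Finset.mem_univ _, ⟨⟨t, htk⟩, ?_⟩⟩
    have : (e j ⟨t, htk⟩ : ℕ) = j - D t := heval j hjn t hle
    rw [this]
    have hdt : d' t = d ⟨t, htk⟩ := by simp [hd', htk]
    have : j < D t + d' t := hlt
    omega
  refine ⟨(Finset.range m).image e, ?_, ?_, ?_⟩
  · intro x hx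
    obtain ⟨j, hj, rfl⟩ := Finset.mem_image.mp hx
    exact hedge j (Finset.mem_range.mp hj)
  · intro x hx y hy hxy i hxyi
    obtain ⟨j1, hj1, rfl⟩ := Finset.mem_image.mp hx
    obtain ⟨j2, hj2, rfl⟩ := Finset.mem_image.mp hy
    have hj1n : j1 < n := lt_of_lt_of_le (Finset.mem_range.mp hj1) hmn
    have hj2n : j2 < n := lt_of_lt_of_le (Finset.mem_range.mp hj2) hmn
    exact hxy (congrArg e (hinj j1 j2 hj1n hj2n i hxyi))
  · rw [Finset.card_image_of_injOn, Finset.card_range]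
    intro j1 hj1 j2 hj2 hj
    have hj1n : j1 < n := lt_of_lt_of_le (Finset.mem_range.mp hj1) hmn
    have hj2n : j2 < n := lt_of_lt_of_le (Finset.mem_range.mp hj2) hmn
    exact hinj j1 j2 hj1n hj2n ⟨0, by omega⟩ (congrFun hj _)
end

section
/- Let H be a k-partite k-graph with n vertices in each class whose largest matching has size m. If v is a vertex such that H minus v still contains a matching of size m, then deg(v) ≤ n^{k-1} − (n−m)^{k-1}. -/
/-- `M` is a matching in the `k`-partite `k`-graph `H` (edges encoded as functions
`Fin k → Fin n`, one vertex per class): a set of pairwise vertex-disjoint edges. -/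
def IsMatching {k n : ℕ} (H M : Finset (Fin k → Fin n)) : Prop :=
  M ⊆ H ∧ ∀ e ∈ M, ∀ f ∈ M, e ≠ f → ∀ i, e i ≠ f i

/-- The degree of the vertex `x` in class `c`. -/
def degV {k n : ℕ} (H : Finset (Fin k → Fin n)) (c : Fin k) (x : Fin n) : ℕ :=
  (H.filter (fun e => e c = x)).card

/-- If the largest matching in a `k`-partite `k`-graph `H` with `n` vertices in each
class has size `m`, and `H` minus the vertex `x` of class `c` still has a matching of
size `m`, then `deg(x) ≤ n^(k-1) − (n−m)^(k-1)`. -/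
theorem degree_bound_of_removable (k n m : ℕ) (H : Finset (Fin k → Fin n))
    (hmax : (∃ M, IsMatching H M ∧ M.card = m) ∧
      ∀ M, IsMatching H M → M.card ≤ m)
    (c : Fin k) (x : Fin n)
    (hv : ∃ M, IsMatching H M ∧ M.card = m ∧ ∀ e ∈ M, e c ≠ x) :
    degV H c x ≤ n ^ (k - 1) - (n - m) ^ (k - 1) := by
  classical
  obtain ⟨M, hM, hMcard, hMx⟩ := hv
  set S : Fin k → Finset (Fin n) := fun i => M.image (fun f => f i) with hS
  set A : Finset (Fin k → Fin n) :=
    Fintype.piFinset (fun i => if i = c then {x} else Finset.univ) with hA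
  set B : Finset (Fin k → Fin n) :=
    Fintype.piFinset (fun i => if i = c then {x} else Finset.univ \ S i) with hB
  -- every edge through x meets M
  have key : ∀ e ∈ H, e c = x → ∃ f ∈ M, ∃ i, e i = f i := by
    intro e he hec
    by_contra hcon
    push_neg at hcon
    have heM : e ∉ M := fun h => hMx e h hec
    have hmatch : IsMatching H (insert e M) := by
      constructor
      · intro g hg
        rcases Finset.mem_insert.mp hg with rfl | hg
        · exact he
        · exact hM.1 hg
      · intro a ha b hb hab i
        rw [Finset.mem_insert] at ha hb
        rcases ha with ha | ha <;> rcases hb with hb | hb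
        · exact absurd (ha.trans hb.symm) hab
        · subst ha; exact hcon b hb i
        · subst hb; exact fun h => hcon a ha i h.symm
        · exact hM.2 a ha b hb hab i
    have := hmax.2 _ hmatch
    rw [Finset.card_insert_of_notMem heM, hMcard] at this
    omega
  have hBA : B ⊆ A := by
    intro g hg
    rw [hB, Fintype.mem_piFinset] at hg
    rw [hA, Fintype.mem_piFinset]
    intro i
    by_cases hi : i = c
    · simpa [hi] using hg i
    · simp [hi]
  have hsub : H.filter (fun e => e c = x) ⊆ A \ B := by
    intro e he
    rw [Finset.mem_filter] at he
    obtain ⟨heH, hec⟩ := he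
    rw [Finset.mem_sdiff]
    constructor
    · rw [hA, Fintype.mem_piFinset]
      intro i
      by_cases hi : i = c <;> simp [hi, hec]
    · rw [hB, Fintype.mem_piFinset]
      push_neg
      obtain ⟨f, hf, i, hefi⟩ := key e heH hec
      have hic : i ≠ c := by
        intro h; subst h
        exact hMx f hf (hefi.symm.trans hec)
      refine ⟨i, ?_⟩
      simp only [if_neg hic, Finset.mem_sdiff, Finset.mem_univ, true_and, not_not]
      exact Finset.mem_image.mpr ⟨f, hf, hefi.symm⟩
  have prodsplit : ∀ g : Fin k → ℕ,
      (∏ i, (if i = c then 1 else g i)) = ∏ i ∈ Finset.univ.erase c, g i := by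
    intro g
    rw [← Finset.prod_erase_mul _ _ (Finset.mem_univ c)]
    simp only [eq_self_iff_true, if_true, mul_one]
    exact Finset.prod_congr rfl (fun i hi => if_neg (Finset.ne_of_mem_erase hi))
  have hcarderase : (Finset.univ.erase c).card = k - 1 := by
    rw [Finset.card_erase_of_mem (Finset.mem_univ c), Finset.card_univ, Fintype.card_fin]
  have cardA : A.card = n ^ (k - 1) := by
    rw [hA, Fintype.card_piFinset]
    have : ∀ i : Fin k, ((if i = c then ({x} : Finset (Fin n)) else Finset.univ)).card
        = if i = c then 1 else n := by
      intro i; by_cases hi : i = c <;> simp [hi]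
    rw [Finset.prod_congr rfl (fun i _ => this i), prodsplit, Finset.prod_const, hcarderase]
  have cardB : (n - m) ^ (k - 1) ≤ B.card := by
    rw [hB, Fintype.card_piFinset]
    have : ∀ i : Fin k, ((if i = c then ({x} : Finset (Fin n)) else Finset.univ \ S i)).card
        = if i = c then 1 else (Finset.univ \ S i).card := by
      intro i; by_cases hi : i = c <;> simp [hi]
    rw [Finset.prod_congr rfl (fun i _ => this i), prodsplit]
    calc (n - m) ^ (k - 1) = ∏ _i ∈ Finset.univ.erase c, (n - m) := by
          rw [Finset.prod_const, hcarderase]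
      _ ≤ ∏ i ∈ Finset.univ.erase c, (Finset.univ \ S i).card := by
          apply Finset.prod_le_prod'
          intro i _
          rw [Finset.card_sdiff_of_subset (Finset.subset_univ _), Finset.card_univ, Fintype.card_fin]
          have : (S i).card ≤ m := hMcard ▸ Finset.card_image_le
          omega
  calc degV H c x ≤ (A \ B).card := Finset.card_le_card hsub
    _ = A.card - B.card := Finset.card_sdiff_of_subset hBA
    _ ≤ n ^ (k - 1) - (n - m) ^ (k - 1) := by
        rw [cardA]; exact Nat.sub_le_sub_left cardB _
end

section
/- Let H be a k-partite k-graph with n vertices in each class whose largest matching has size m. If T is a legal k-set (one vertex per partition class) such that H minus T contains a matching of size m − k + 1, then some vertex v ∈ T satisfies deg(v) ≤ n^{k-1} − (n−m)^{k-1}, and moreover n^{k-1} − (n−m)^{k-1} ≤ k·m·n^{k-2}. -/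
/-- Arithmetic: `a^(d+1) ≤ b^(d+1) + (d+1)(a-b)a^d` for `b ≤ a`. -/
lemma aux_pow_sub_pow_le (a b d : ℕ) (hba : b ≤ a) :
    a ^ (d + 1) ≤ b ^ (d + 1) + (d + 1) * (a - b) * a ^ d := by
  induction d with
  | zero => simpa using by omega
  | succ d ih =>
    have hpow : b ^ (d + 1) ≤ a ^ (d + 1) := Nat.pow_le_pow_left hba _
    calc a ^ (d + 2) = a * a ^ (d + 1) := by ring
      _ ≤ a * (b ^ (d + 1) + (d + 1) * (a - b) * a ^ d) := Nat.mul_le_mul_left _ ih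
      _ = a * b ^ (d + 1) + (d + 1) * (a - b) * (a * a ^ d) := by ring
      _ = ((a - b) + b) * b ^ (d + 1) + (d + 1) * (a - b) * a ^ (d + 1) := by
          rw [Nat.sub_add_cancel hba]; ring
      _ = (a - b) * b ^ (d + 1) + b ^ (d + 2) + (d + 1) * (a - b) * a ^ (d + 1) := by ring
      _ ≤ (a - b) * a ^ (d + 1) + b ^ (d + 2) + (d + 1) * (a - b) * a ^ (d + 1) := by
          gcongr
      _ = b ^ (d + 2) + (d + 2) * (a - b) * a ^ (d + 1) := by ring

/-- Counting step: if the degree of `x` in class `i` exceeds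
`n^(k-1) - (n-m)^(k-1)`, then for any family of forbidden sets of size `≤ m`
there is an edge through `x` avoiding them in all other coordinates. -/
lemma aux_exists_edge {k n : ℕ} (m : ℕ) (H : Finset (Fin k → Fin n)) (i : Fin k)
    (x : Fin n)
    (hdeg : n ^ (k - 1) - (n - m) ^ (k - 1) < degV H i x)
    (F : Fin k → Finset (Fin n)) (hF : ∀ j, (F j).card ≤ m) :
    ∃ e ∈ H, e i = x ∧ ∀ j, j ≠ i → e j ∉ F j := by
  classical
  obtain ⟨P, hP⟩ : ∃ P : Finset (Fin k → Fin n),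
      P = Fintype.piFinset (fun j => if j = i then {x} else (F j)ᶜ) := ⟨_, rfl⟩
  obtain ⟨Q, hQ⟩ : ∃ Q : Finset (Fin k → Fin n),
      Q = Fintype.piFinset (fun j => if j = i then {x} else Finset.univ) := ⟨_, rfl⟩
  have hPQ : P ⊆ Q := by
    intro e he
    rw [hP, Fintype.mem_piFinset] at he
    rw [hQ, Fintype.mem_piFinset]
    intro j
    by_cases hj : j = i
    · simpa [hj] using he i
    · simp [hj]
  have hker : (Finset.univ.erase i).card = k - 1 := by
    rw [Finset.card_erase_of_mem (Finset.mem_univ i), Finset.card_univ, Fintype.card_fin]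
  have hPcard : (n - m) ^ (k - 1) ≤ P.card := by
    rw [hP, Fintype.card_piFinset,
      ← Finset.mul_prod_erase Finset.univ _ (Finset.mem_univ i),
      if_pos rfl, Finset.card_singleton, one_mul]
    calc (n - m) ^ (k - 1)
        = ∏ _j ∈ Finset.univ.erase i, (n - m) := by rw [Finset.prod_const, hker]
      _ ≤ ∏ j ∈ Finset.univ.erase i,
            (if j = i then ({x} : Finset (Fin n)) else (F j)ᶜ).card := by
          apply Finset.prod_le_prod'
          intro j hj
          rw [if_neg (Finset.ne_of_mem_erase hj), Finset.card_compl, Fintype.card_fin]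
          have := hF j
          omega
  have hQcard : Q.card = n ^ (k - 1) := by
    rw [hQ, Fintype.card_piFinset,
      ← Finset.mul_prod_erase Finset.univ _ (Finset.mem_univ i),
      if_pos rfl, Finset.card_singleton, one_mul]
    calc ∏ j ∈ Finset.univ.erase i,
          (if j = i then ({x} : Finset (Fin n)) else Finset.univ).card
        = ∏ _j ∈ Finset.univ.erase i, n := by
          apply Finset.prod_congr rfl
          intro j hj
          rw [if_neg (Finset.ne_of_mem_erase hj), Finset.card_univ, Fintype.card_fin]
      _ = n ^ (k - 1) := by rw [Finset.prod_const, hker]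
  have hdQ : degV H i x = (Q ∩ H).card := by
    apply congrArg Finset.card
    ext e
    simp only [Finset.mem_filter, Finset.mem_inter, hQ, Fintype.mem_piFinset]
    constructor
    · rintro ⟨heH, hex⟩
      refine ⟨fun j => ?_, heH⟩
      by_cases hj : j = i
      · subst hj; simp [hex]
      · simp [hj]
    · rintro ⟨hq, heH⟩
      refine ⟨heH, ?_⟩
      have := hq i
      simpa using this
  have e1 : (P ∩ H).card + (P \ H).card = P.card := Finset.card_inter_add_card_sdiff P H
  have e2 : (Q ∩ H).card + (Q \ H).card = Q.card := Finset.card_inter_add_card_sdiff Q H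
  have e3 : (P \ H).card ≤ (Q \ H).card :=
    Finset.card_le_card (Finset.sdiff_subset_sdiff hPQ Finset.Subset.rfl)
  have hpos : 0 < (P ∩ H).card := by
    rw [hdQ] at hdeg
    omega
  obtain ⟨e, he⟩ := Finset.card_pos.mp hpos
  rw [Finset.mem_inter] at he
  have hemem := he.1
  rw [hP, Fintype.mem_piFinset] at hemem
  refine ⟨e, he.2, ?_, ?_⟩
  · have := hemem i
    simpa using this
  · intro j hj
    have := hemem j
    rw [if_neg hj, Finset.mem_compl] at this
    exact this

/-- Inductive construction of larger and larger matchings through prefixes of `T`. -/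
lemma aux_build {k n : ℕ} (m t : ℕ) (H : Finset (Fin k → Fin n))
    (T : Fin k → Fin n) (ht : t ≤ k) (htm : (m + 1 - k) + t ≤ m + 1)
    (hdeg : ∀ i : Fin k, n ^ (k - 1) - (n - m) ^ (k - 1) < degV H i (T i))
    (M0 : Finset (Fin k → Fin n)) (hM0 : IsMatching H M0)
    (hM0c : M0.card = m + 1 - k) (hM0T : ∀ e ∈ M0, ∀ i, e i ≠ T i) :
    ∀ s, s ≤ t → ∃ M, IsMatching H M ∧ M.card = (m + 1 - k) + s ∧
      ∀ e ∈ M, ∀ j : Fin k, s ≤ (j : ℕ) → (j : ℕ) < t → e j ≠ T j := by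
  classical
  intro s
  induction s with
  | zero =>
    intro _
    exact ⟨M0, hM0, by omega, fun e he j _ _ => hM0T e he j⟩
  | succ s ih =>
    intro hst
    obtain ⟨M, hM, hMc, hMT⟩ := ih (by omega)
    have hsk : s < k := by omega
    obtain ⟨i, hival⟩ : ∃ i : Fin k, (i : ℕ) = s := ⟨⟨s, hsk⟩, rfl⟩
    have hFcard : ∀ j : Fin k,
        (M.image (fun e => e j) ∪
          (if s < (j : ℕ) ∧ (j : ℕ) < t then {T j} else ∅)).card ≤ m := by
      intro j
      have h1 : (M.image (fun e => e j)).card ≤ M.card := Finset.card_image_le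
      by_cases hcase : s < (j : ℕ) ∧ (j : ℕ) < t
      · rw [if_pos hcase]
        have h3 := Finset.card_union_le (M.image (fun e => e j)) ({T j} : Finset (Fin n))
        rw [Finset.card_singleton] at h3
        generalize (M.image (fun e => e j) ∪ {T j}).card = B at h3 ⊢
        generalize (M.image (fun e => e j)).card = A at h1 h3
        omega
      · rw [if_neg hcase, Finset.union_empty]
        generalize (M.image (fun e => e j)).card = A at h1 ⊢
        omega
    obtain ⟨e, heH, hei, heF⟩ := aux_exists_edge m H i (T i) (hdeg i)
      (fun j => M.image (fun e => e j) ∪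
        (if s < (j : ℕ) ∧ (j : ℕ) < t then {T j} else ∅)) hFcard
    have heM : e ∉ M := by
      intro hcon
      exact hMT e hcon i (by omega) (by omega) hei
    have hdisj : ∀ f ∈ M, ∀ j, e j ≠ f j := by
      intro f hf j
      by_cases hj : j = i
      · subst hj
        rw [hei]
        exact fun hx => hMT f hf _ (by omega) (by omega) hx.symm
      · intro hx
        exact heF j hj (Finset.mem_union_left _ (Finset.mem_image.mpr ⟨f, hf, hx.symm⟩))
    refine ⟨insert e M, ⟨?_, ?_⟩, ?_, ?_⟩
    · intro f hf
      rcases Finset.mem_insert.mp hf with h | h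
      · subst h; exact heH
      · exact hM.1 h
    · intro a ha b hb hab j
      rcases Finset.mem_insert.mp ha with h | h
      · subst h
        rcases Finset.mem_insert.mp hb with h' | h'
        · exact absurd h'.symm hab
        · exact hdisj b h' j
      · rcases Finset.mem_insert.mp hb with h' | h'
        · subst h'
          exact fun hx => hdisj a h j hx.symm
        · exact hM.2 a h b h' hab j
    · rw [Finset.card_insert_of_notMem heM, hMc]; omega
    · intro f hf j hj1 hj2
      rcases Finset.mem_insert.mp hf with h | h
      · subst h
        have hji : j ≠ i := by
          intro hcon
          rw [hcon] at hj1
          omega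
        intro hx
        refine heF j hji (Finset.mem_union_right _ ?_)
        rw [if_pos ⟨by omega, hj2⟩]
        exact Finset.mem_singleton.mpr hx
      · exact hMT f h j (by omega) hj2

/-- Let `H` be a `k`-partite `k`-graph with `n` vertices in each class whose largest
matching has size `m ≤ n`. If `T` is a legal `k`-set (one vertex `T i` per class)
such that `H` minus `T` contains a matching of size `m - k + 1`, then some vertex of
`T` has degree at most `n^(k-1) − (n−m)^(k-1)`; moreover
`n^(k-1) − (n−m)^(k-1) ≤ k·m·n^(k-2)`. -/
theorem degree_bound_of_removable_transversal (k n m : ℕ) (hm : m ≤ n)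
    (H : Finset (Fin k → Fin n))
    (hmax : (∃ M, IsMatching H M ∧ M.card = m) ∧
      ∀ M, IsMatching H M → M.card ≤ m)
    (T : Fin k → Fin n)
    (hT : ∃ M, IsMatching H M ∧ M.card = m + 1 - k ∧ ∀ e ∈ M, ∀ i, e i ≠ T i) :
    (∃ i : Fin k, degV H i (T i) ≤ n ^ (k - 1) - (n - m) ^ (k - 1)) ∧
      n ^ (k - 1) - (n - m) ^ (k - 1) ≤ k * m * n ^ (k - 2) := by
  constructor
  · by_contra hcon
    push_neg at hcon
    obtain ⟨M0, hM0, hM0c, hM0T⟩ := hT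
    obtain ⟨M, hM, hMc, _⟩ := aux_build m (min k (m + 1)) H T (by omega) (by omega)
      hcon M0 hM0 hM0c hM0T (min k (m + 1)) le_rfl
    have := hmax.2 M hM
    omega
  · rcases k with _ | k
    · simp
    rcases k with _ | k
    · simp
    have h := aux_pow_sub_pow_le n (n - m) k (Nat.sub_le n m)
    have h2 : n - (n - m) = m := by omega
    rw [h2] at h
    show n ^ (k + 1) - (n - m) ^ (k + 1) ≤ (k + 1 + 1) * m * n ^ k
    have h4 : n ^ (k + 1) - (n - m) ^ (k + 1) ≤ (k + 1) * m * n ^ k := by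
      apply Nat.sub_le_of_le_add
      calc n ^ (k + 1) ≤ (n - m) ^ (k + 1) + (k + 1) * m * n ^ k := h
        _ = (k + 1) * m * n ^ k + (n - m) ^ (k + 1) := by ring
    calc n ^ (k + 1) - (n - m) ^ (k + 1) ≤ (k + 1) * m * n ^ k := h4
      _ ≤ (k + 1 + 1) * m * n ^ k :=
        Nat.mul_le_mul (Nat.mul_le_mul (by omega) le_rfl) le_rfl
end

section
/- For every integer n ≥ 2 and 1 ≤ m ≤ n, the k-partite k-graph H*_k(n;m) contains no matching of size greater than m. -/
/-- `H_k(n;m)`: the `k`-partite `k`-graph (edges encoded as functions `Fin k → Fin n`)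
whose edges are the legal `k`-sets meeting `W = W_1 ∪ ⋯ ∪ W_k`, where `W_i` consists of
the first `⌊(m+i-1)/k⌋` vertices of class `i` (indexing by `j = i-1 : Fin k`). -/
def Hk (k n m : ℕ) : Finset (Fin k → Fin n) :=
  Finset.univ.filter (fun e => ∃ i : Fin k, (e i : ℕ) < (m + (i : ℕ)) / k)

/-- `H*_k(n;m)`: obtained from `H_k(n;m-1)` by fixing vertices `u i ∈ U_i` and adding
all legal `k`-sets `T` with `|T ∩ {u 1,…,u k}| > k/2`. -/
def HstarK (k n m : ℕ) (u : Fin k → Fin n) : Finset (Fin k → Fin n) :=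
  Hk k n (m - 1) ∪
    Finset.univ.filter (fun e =>
      k < 2 * (Finset.univ.filter (fun i : Fin k => e i = u i)).card)

/-- For `n ≥ 2` and `1 ≤ m ≤ n`, the `k`-partite `k`-graph `H*_k(n;m)` contains no
matching of size greater than `m`. -/
theorem HstarK_no_large_matching (k n m : ℕ) (hk : 2 ≤ k) (hn : 2 ≤ n)
    (hm1 : 1 ≤ m) (hmn : m ≤ n) (u : Fin k → Fin n)
    (hu : ∀ i : Fin k, ((m - 1) + (i : ℕ)) / k ≤ (u i : ℕ))
    (M : Finset (Fin k → Fin n)) (hM : M ⊆ HstarK k n m u)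
    (hdisj : ∀ e ∈ M, ∀ f ∈ M, e ≠ f → ∀ i, e i ≠ f i) :
    M.card ≤ m := by
  classical
  set P : (Fin k → Fin n) → Prop :=
    fun e => ∃ i : Fin k, (e i : ℕ) < (m - 1 + (i : ℕ)) / k with hP
  set M1 : Finset (Fin k → Fin n) := M.filter P with hM1
  set M2 : Finset (Fin k → Fin n) := M.filter (fun e => ¬ P e) with hM2
  -- every element of M2 agrees with u in more than k/2 coordinates
  have hM2agree : ∀ e ∈ M2, k < 2 * (Finset.univ.filter (fun i : Fin k => e i = u i)).card := by
    intro e he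
    rw [hM2, Finset.mem_filter] at he
    have := hM he.1
    rw [HstarK, Finset.mem_union] at this
    rcases this with h | h
    · rw [Hk, Finset.mem_filter] at h
      exact absurd h.2 he.2
    · exact (Finset.mem_filter.mp h).2
  have hM2card : M2.card ≤ 1 := by
    rw [Finset.card_le_one]
    intro e he f hf
    by_contra hef
    have hA := hM2agree e he
    have hB := hM2agree f hf
    have hcard : (Finset.univ : Finset (Fin k)).card = k := by simp
    set A := Finset.univ.filter (fun i : Fin k => e i = u i)
    set B := Finset.univ.filter (fun i : Fin k => f i = u i)
    have hinter : 0 < (A ∩ B).card := by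
      have h1 : (A ∪ B).card + (A ∩ B).card = A.card + B.card :=
        Finset.card_union_add_card_inter A B
      have h2 : (A ∪ B).card ≤ k := by
        calc (A ∪ B).card ≤ (Finset.univ : Finset (Fin k)).card :=
              Finset.card_le_card (Finset.subset_univ _)
          _ = k := hcard
      omega
    obtain ⟨i, hi⟩ := Finset.card_pos.mp hinter
    rw [Finset.mem_inter, Finset.mem_filter, Finset.mem_filter] at hi
    have heM : e ∈ M := (Finset.mem_filter.mp (hM2 ▸ he)).1
    have hfM : f ∈ M := (Finset.mem_filter.mp (hM2 ▸ hf)).1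
    exact hdisj e heM f hfM hef i (hi.1.2.trans hi.2.2.symm)
  -- bound M1 by injecting into range (m-1)
  have hM1card : M1.card ≤ m - 1 := by
    have hkpos : 0 < k := by omega
    set φ : (Fin k → Fin n) → ℕ := fun e =>
      if h : P e then k * (e h.choose : ℕ) + (k - 1 - (h.choose : ℕ)) else 0 with hφ
    have key : ∀ e, (h : P e) → k * (e h.choose : ℕ) + (k - 1 - (h.choose : ℕ)) < m - 1 := by
      intro e h
      have h1 : ((e h.choose : ℕ) + 1) * k ≤ m - 1 + (h.choose : ℕ) :=
        (Nat.le_div_iff_mul_le hkpos).mp h.choose_spec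
      rw [add_mul, one_mul, mul_comm] at h1
      have h2 : (h.choose : ℕ) < k := (h.choose).isLt
      omega
    have hmaps : ∀ e ∈ M1, φ e ∈ Finset.range (m - 1) := by
      intro e he
      have hPe : P e := (Finset.mem_filter.mp (hM1 ▸ he)).2
      rw [Finset.mem_range, hφ]
      simp only [dif_pos hPe]
      exact key e hPe
    have hinj : Set.InjOn φ M1 := by
      intro e he f hf hef
      have hPe : P e := (Finset.mem_filter.mp (hM1 ▸ (Finset.mem_coe.mp he))).2
      have hPf : P f := (Finset.mem_filter.mp (hM1 ▸ (Finset.mem_coe.mp hf))).2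
      have heM : e ∈ M := (Finset.mem_filter.mp (hM1 ▸ (Finset.mem_coe.mp he))).1
      have hfM : f ∈ M := (Finset.mem_filter.mp (hM1 ▸ (Finset.mem_coe.mp hf))).1
      rw [hφ] at hef
      simp only [dif_pos hPe, dif_pos hPf] at hef
      have hi : (hPe.choose : ℕ) < k := (hPe.choose).isLt
      have hj : (hPf.choose : ℕ) < k := (hPf.choose).isLt
      have hp : k - 1 - (hPe.choose : ℕ) < k := by omega
      have hq : k - 1 - (hPf.choose : ℕ) < k := by omega
      have hmod : k - 1 - (hPe.choose : ℕ) = k - 1 - (hPf.choose : ℕ) := by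
        have hmm := congrArg (· % k) hef
        simpa [Nat.mul_add_mod, Nat.mod_eq_of_lt hp, Nat.mod_eq_of_lt hq] using hmm
      have hij : (hPe.choose : ℕ) = (hPf.choose : ℕ) := by omega
      have hij' : hPe.choose = hPf.choose := Fin.ext hij
      have hval : (e hPe.choose : ℕ) = (f hPf.choose : ℕ) :=
        Nat.eq_of_mul_eq_mul_left hkpos (by omega)
      by_contra hne
      refine hdisj e heM f hfM hne hPe.choose (Fin.ext ?_)
      rw [hval, hij']
    calc M1.card ≤ (Finset.range (m - 1)).card :=
          Finset.card_le_card_of_injOn φ hmaps hinj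
      _ = m - 1 := Finset.card_range _
  have hsplit : M1.card + M2.card = M.card := Finset.card_filter_add_card_filter_not _
  omega
end

section
/- Let H be a 3-partite 3-graph with n vertices in each class such that every vertex of H is α-good with respect to H'(n; d_1, d_2, d_3), where 0 < α < 2^{-8}, d_1, d_2, d_3 ≥ 5n/16, d_1 + d_2 + d_3 = n, and n ≥ 10. Then H contains a perfect matching. -/
open Finset


/-- `H'(n; d₁,d₂,d₃)`: the 3-partite 3-graph (edges encoded as functions
`Fin 3 → Fin n`) whose edges are the legal triples of type `UUW` or `UWW`, i.e. those
meeting `W = W_1 ∪ W_2 ∪ W_3` in exactly one or exactly two vertices, where `W_i`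
consists of the first `d i` vertices of class `i`. -/
def H'nd (n : ℕ) (d : Fin 3 → ℕ) : Finset (Fin 3 → Fin n) :=
  Finset.univ.filter (fun e =>
    1 ≤ (Finset.univ.filter (fun i : Fin 3 => (e i : ℕ) < d i)).card ∧
    (Finset.univ.filter (fun i : Fin 3 => (e i : ℕ) < d i)).card ≤ 2)

/-- interval inside `Fin n` -/
def Iv (n lo hi : ℕ) : Finset (Fin n) :=
  Finset.univ.filter (fun x => lo ≤ (x : ℕ) ∧ (x : ℕ) < hi)

lemma mem_Iv {n lo hi : ℕ} {x : Fin n} : x ∈ Iv n lo hi ↔ lo ≤ (x : ℕ) ∧ (x : ℕ) < hi := by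
  simp [Iv]

lemma Iv_card {n lo hi : ℕ} (h : hi ≤ n) : (Iv n lo hi).card = hi - lo := by
  have : (Iv n lo hi).card = (Finset.Ico lo hi).card := by
    apply card_bij (fun (x : Fin n) _ => (x : ℕ))
    · intro x hx
      exact Finset.mem_Ico.2 (mem_Iv.1 hx)
    · intro x _ y _ hxy
      exact Fin.val_injective hxy
    · intro v hv
      have hvn : v < n := lt_of_lt_of_le (Finset.mem_Ico.1 hv).2 h
      exact ⟨⟨v, hvn⟩, mem_Iv.2 ⟨(Finset.mem_Ico.1 hv).1, (Finset.mem_Ico.1 hv).2⟩, rfl⟩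
  rw [this, Nat.card_Ico]

lemma H'nd_mem_of {n : ℕ} {d : Fin 3 → ℕ} {e : Fin 3 → Fin n} (i0 : Fin 3)
    (h1 : (e i0 : ℕ) < d i0) (h2 : ∀ j, j ≠ i0 → ¬ ((e j : ℕ) < d j)) :
    e ∈ H'nd n d := by
  have hset : Finset.univ.filter (fun i : Fin 3 => (e i : ℕ) < d i) = {i0} := by
    ext j
    simp only [mem_filter, mem_univ, true_and, mem_singleton]
    constructor
    · intro hj
      by_contra hne
      exact h2 j hne hj
    · rintro rfl
      exact h1
  refine mem_filter.2 ⟨mem_univ _, ?_⟩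
  rw [hset, card_singleton]
  exact ⟨le_rfl, by norm_num⟩

lemma bad_le {n : ℕ} {d : Fin 3 → ℕ} {α : ℝ} {H : Finset (Fin 3 → Fin n)}
    (hgood : ∀ (c : Fin 3) (x : Fin n),
      ((((H'nd n d).filter (fun e => e c = x)) \ H).card : ℝ) ≤ α * n ^ 2)
    (c : Fin 3) (v : Fin n) (Q : Finset (Fin n × Fin n)) (F : Fin n × Fin n → (Fin 3 → Fin n))
    (hF : ∀ q ∈ Q, F q ∈ H'nd n d ∧ F q c = v)
    (hinj : ∀ q ∈ Q, ∀ q' ∈ Q, F q = F q' → q = q') :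
    ((Q.filter fun q => F q ∉ H).card : ℝ) ≤ α * n ^ 2 := by
  refine le_trans (Nat.cast_le.2 (card_le_card_of_injOn F ?_ ?_)) (hgood c v)
  · intro q hq
    have hq' := mem_filter.1 hq
    exact mem_sdiff.2 ⟨mem_filter.2 ⟨(hF q hq'.1).1, (hF q hq'.1).2⟩, hq'.2⟩
  · intro q hq q' hq' h
    simp only [coe_filter, Set.mem_setOf_eq] at hq hq'
    exact hinj q hq.1 q' hq'.1 h

lemma harith_gen {n m : ℕ} {α : ℝ} (hα0 : 0 < α) (hα1 : α < 2 ^ (-8 : ℤ))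
    (hm : (5 : ℝ) * n / 16 ≤ m) :
    ∀ k : ℕ, k < m → ((m : ℝ) - k) ^ 2 ≤ α * n ^ 2 →
      4 * (α * n ^ 2) < (k : ℝ) * ((k : ℝ) - 3) := by
  intro k hk hc
  have hα : α < 1 / 256 := by
    have : ((2 : ℝ) ^ (-8 : ℤ)) = 1 / 256 := by norm_num
    linarith [this ▸ hα1]
  have hn0 : (0 : ℝ) ≤ (n : ℝ) := Nat.cast_nonneg n
  have h1k : (1 : ℝ) ≤ (m : ℝ) - k := by
    have : (k : ℝ) + 1 ≤ m := by exact_mod_cast hk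
    linarith
  have hB1 : (1 : ℝ) ≤ α * n ^ 2 := le_trans (by nlinarith) hc
  have hn2 : (256 : ℝ) < (n : ℝ) ^ 2 := by nlinarith
  have hn16 : (16 : ℝ) < (n : ℝ) := by nlinarith [sq_nonneg ((n : ℝ) - 16)]
  have hmk : (m : ℝ) - k < (n : ℝ) / 16 := by nlinarith
  have hk4 : (n : ℝ) / 4 < (k : ℝ) := by linarith
  have hk3 : (0 : ℝ) < (k : ℝ) - 3 := by linarith
  nlinarith [mul_lt_mul_of_pos_right hk4 hk3, sq_nonneg ((n:ℝ) - 16)]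

section Dirac
variable {V : Type} [DecidableEq V]

set_option maxHeartbeats 1600000 in
lemma dirac (X Y Z : Finset V) (m : ℕ)
    (hX : X.card = m) (hY : Y.card = m) (hZ : Z.card = m)
    (P : V → V → V → Prop) [∀ a b c, Decidable (P a b c)] (B : ℝ)
    (hx : ∀ a ∈ X, (((Y ×ˢ Z).filter fun w => ¬ P a w.1 w.2).card : ℝ) ≤ B)
    (hy : ∀ b ∈ Y, (((X ×ˢ Z).filter fun w => ¬ P w.1 b w.2).card : ℝ) ≤ B)
    (hz : ∀ c ∈ Z, (((X ×ˢ Y).filter fun w => ¬ P w.1 w.2 c).card : ℝ) ≤ B)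
    (harith : ∀ k : ℕ, k < m → ((m : ℝ) - k)^2 ≤ B → 4 * B < (k : ℝ) * ((k : ℝ) - 3)) :
    ∃ T : Finset (V × V × V), T.card = m ∧
      (∀ p ∈ T, p.1 ∈ X ∧ p.2.1 ∈ Y ∧ p.2.2 ∈ Z ∧ P p.1 p.2.1 p.2.2) ∧
      (∀ p ∈ T, ∀ q ∈ T, p ≠ q → p.1 ≠ q.1 ∧ p.2.1 ≠ q.2.1 ∧ p.2.2 ≠ q.2.2) := by
  suffices key : ∀ k, k ≤ m → ∃ T : Finset (V × V × V), T.card = k ∧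
      (∀ p ∈ T, p.1 ∈ X ∧ p.2.1 ∈ Y ∧ p.2.2 ∈ Z ∧ P p.1 p.2.1 p.2.2) ∧
      (∀ p ∈ T, ∀ q ∈ T, p ≠ q → p.1 ≠ q.1 ∧ p.2.1 ≠ q.2.1 ∧ p.2.2 ≠ q.2.2) by
    exact key m le_rfl
  intro k
  induction k with
  | zero => intro _; exact ⟨∅, by simp⟩
  | succ k ih =>
    intro hk1
    have hkm : k < m := hk1
    obtain ⟨T, hTcard, hTmem, hTdis⟩ := ih hkm.le
    -- unused vertex sets
    set Xu := X \ T.image (fun p => p.1) with hXu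
    set Yu := Y \ T.image (fun p => p.2.1) with hYu
    set Zu := Z \ T.image (fun p => p.2.2) with hZu
    have hinj1 : Set.InjOn (fun p : V × V × V => p.1) T := by
      intro p hp q hq h
      by_contra hne
      exact ((hTdis p hp q hq hne).1 h).elim
    have hinj2 : Set.InjOn (fun p : V × V × V => p.2.1) T := by
      intro p hp q hq h
      by_contra hne
      exact ((hTdis p hp q hq hne).2.1 h).elim
    have hinj3 : Set.InjOn (fun p : V × V × V => p.2.2) T := by
      intro p hp q hq h
      by_contra hne
      exact ((hTdis p hp q hq hne).2.2 h).elim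
    have hXuc : Xu.card = m - k := by
      rw [hXu, card_sdiff_of_subset (by intro v hv; obtain ⟨p, hp, rfl⟩ := mem_image.1 hv; exact (hTmem p hp).1),
        card_image_of_injOn hinj1, hX, hTcard]
    have hYuc : Yu.card = m - k := by
      rw [hYu, card_sdiff_of_subset (by intro v hv; obtain ⟨p, hp, rfl⟩ := mem_image.1 hv; exact (hTmem p hp).2.1),
        card_image_of_injOn hinj2, hY, hTcard]
    have hZuc : Zu.card = m - k := by
      rw [hZu, card_sdiff_of_subset (by intro v hv; obtain ⟨p, hp, rfl⟩ := mem_image.1 hv; exact (hTmem p hp).2.2.1),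
        card_image_of_injOn hinj3, hZ, hTcard]
    have hpos : 0 < m - k := Nat.sub_pos_of_lt hkm
    obtain ⟨a, ha⟩ := card_pos.1 (hXuc ▸ hpos)
    obtain ⟨b, hb⟩ := card_pos.1 (hYuc ▸ hpos)
    obtain ⟨c, hc⟩ := card_pos.1 (hZuc ▸ hpos)
    have haX : a ∈ X := (mem_sdiff.1 ha).1
    have hbY : b ∈ Y := (mem_sdiff.1 hb).1
    have hcZ : c ∈ Z := (mem_sdiff.1 hc).1
    have haT : ∀ p ∈ T, p.1 ≠ a := by
      intro p hp h; exact (mem_sdiff.1 ha).2 (mem_image.2 ⟨p, hp, h⟩)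
    have hbT : ∀ p ∈ T, p.2.1 ≠ b := by
      intro p hp h; exact (mem_sdiff.1 hb).2 (mem_image.2 ⟨p, hp, h⟩)
    have hcT : ∀ p ∈ T, p.2.2 ≠ c := by
      intro p hp h; exact (mem_sdiff.1 hc).2 (mem_image.2 ⟨p, hp, h⟩)
    by_cases hcase : ((m : ℝ) - k)^2 ≤ B

    · -- swap case
      have h4B := harith k hkm hcase
      have hmk1 : (1 : ℝ) ≤ (m : ℝ) - k := by
        have : (k : ℝ) + 1 ≤ m := by exact_mod_cast hkm
        linarith
      have hB1 : (1 : ℝ) ≤ B := le_trans (by nlinarith) hcase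
      have hk4 : 4 ≤ k := by
        by_contra hlt
        push_neg at hlt
        interval_cases k <;> norm_num at h4B <;> linarith
      -- the big product and filters
      set Pi3 := T ×ˢ (T ×ˢ T) with hPi3
      have hPic : Pi3.card = k ^ 3 := by
        simp [hPi3, card_product, hTcard]; ring
      have hmemPi : ∀ x ∈ Pi3, x.1 ∈ T ∧ x.2.1 ∈ T ∧ x.2.2 ∈ T := by
        intro x hx
        simp only [hPi3, mem_product] at hx
        exact ⟨hx.1, hx.2.1, hx.2.2⟩
      -- cardinality of non-distinct triples
      have hndis : (Pi3.filter (fun x => ¬ (x.1 ≠ x.2.1 ∧ x.1 ≠ x.2.2 ∧ x.2.1 ≠ x.2.2))).card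
          ≤ 3 * k ^ 2 := by
        have hsub : Pi3.filter (fun x => ¬ (x.1 ≠ x.2.1 ∧ x.1 ≠ x.2.2 ∧ x.2.1 ≠ x.2.2)) ⊆
            (Pi3.filter fun x => x.1 = x.2.1) ∪
            ((Pi3.filter fun x => x.1 = x.2.2) ∪ (Pi3.filter fun x => x.2.1 = x.2.2)) := by
          intro x hx
          simp only [mem_filter, mem_union] at hx ⊢
          tauto
        have e1 : (Pi3.filter fun x => x.1 = x.2.1).card ≤ k ^ 2 := by
          have := card_le_card_of_injOn (fun x => (x.1, x.2.2))
            (s := Pi3.filter fun x => x.1 = x.2.1) (t := T ×ˢ T)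
            (by intro x hx
                have hm := hmemPi x (mem_of_mem_filter x hx)
                exact mem_product.2 ⟨hm.1, hm.2.2⟩)
            (by intro x hx y hy h
                simp only [coe_filter, Set.mem_setOf_eq] at hx hy
                simp only [Prod.mk.injEq] at h
                obtain ⟨h1, h3⟩ := h
                have h2 : x.2.1 = y.2.1 := by rw [← hx.2, ← hy.2, h1]
                exact Prod.ext h1 (Prod.ext h2 h3))
          simpa [card_product, hTcard, sq] using this
        have e2 : (Pi3.filter fun x => x.1 = x.2.2).card ≤ k ^ 2 := by
          have := card_le_card_of_injOn (fun x => (x.1, x.2.1))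
            (s := Pi3.filter fun x => x.1 = x.2.2) (t := T ×ˢ T)
            (by intro x hx
                have hm := hmemPi x (mem_of_mem_filter x hx)
                exact mem_product.2 ⟨hm.1, hm.2.1⟩)
            (by intro x hx y hy h
                simp only [coe_filter, Set.mem_setOf_eq] at hx hy
                simp only [Prod.mk.injEq] at h
                obtain ⟨h1, h2⟩ := h
                have h3 : x.2.2 = y.2.2 := by rw [← hx.2, ← hy.2, h1]
                exact Prod.ext h1 (Prod.ext h2 h3))
          simpa [card_product, hTcard, sq] using this
        have e3 : (Pi3.filter fun x => x.2.1 = x.2.2).card ≤ k ^ 2 := by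
          have := card_le_card_of_injOn (fun x => (x.1, x.2.1))
            (s := Pi3.filter fun x => x.2.1 = x.2.2) (t := T ×ˢ T)
            (by intro x hx
                have hm := hmemPi x (mem_of_mem_filter x hx)
                exact mem_product.2 ⟨hm.1, hm.2.1⟩)
            (by intro x hx y hy h
                simp only [coe_filter, Set.mem_setOf_eq] at hx hy
                simp only [Prod.mk.injEq] at h
                obtain ⟨h1, h2⟩ := h
                have h3 : x.2.2 = y.2.2 := by rw [← hx.2, ← hy.2, h2]
                exact Prod.ext h1 (Prod.ext h2 h3))
          simpa [card_product, hTcard, sq] using this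
        calc (Pi3.filter (fun x => ¬ (x.1 ≠ x.2.1 ∧ x.1 ≠ x.2.2 ∧ x.2.1 ≠ x.2.2))).card
            ≤ _ := card_le_card hsub
          _ ≤ _ := card_union_le _ _
          _ ≤ k ^ 2 + ((Pi3.filter fun x => x.1 = x.2.2) ∪ (Pi3.filter fun x => x.2.1 = x.2.2)).card := by
              gcongr
          _ ≤ k ^ 2 + ((Pi3.filter fun x => x.1 = x.2.2).card + (Pi3.filter fun x => x.2.1 = x.2.2).card) := by
              gcongr
              exact card_union_le _ _
          _ ≤ 3 * k ^ 2 := by omega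
      -- bad sets
      have hkR : (0:ℝ) ≤ (k:ℝ) := Nat.cast_nonneg k
      have hBad1 : ((Pi3.filter (fun x => (x.1 ≠ x.2.1 ∧ x.1 ≠ x.2.2 ∧ x.2.1 ≠ x.2.2) ∧
          ¬ P a x.1.2.1 x.2.1.2.2)).card : ℝ) ≤ B * k := by
        have hc := card_le_card_of_injOn (fun x => ((x.1.2.1, x.2.1.2.2), x.2.2))
          (s := Pi3.filter (fun x => (x.1 ≠ x.2.1 ∧ x.1 ≠ x.2.2 ∧ x.2.1 ≠ x.2.2) ∧
            ¬ P a x.1.2.1 x.2.1.2.2))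
          (t := ((Y ×ˢ Z).filter fun w => ¬ P a w.1 w.2) ×ˢ T)
          (by intro x hx
              have hm := hmemPi x (mem_of_mem_filter x hx)
              have hx' := (mem_filter.1 hx).2
              exact mem_product.2 ⟨mem_filter.2 ⟨mem_product.2
                ⟨(hTmem _ hm.1).2.1, (hTmem _ hm.2.1).2.2.1⟩, hx'.2⟩, hm.2.2⟩)
          (by intro x hx y hy h
              simp only [coe_filter, Set.mem_setOf_eq] at hx hy
              have hmx := hmemPi x hx.1
              have hmy := hmemPi y hy.1
              simp only [Prod.mk.injEq] at h
              obtain ⟨⟨h1, h2⟩, h3⟩ := h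
              exact Prod.ext (hinj2 (mem_coe.2 hmx.1) (mem_coe.2 hmy.1) h1)
                (Prod.ext (hinj3 (mem_coe.2 hmx.2.1) (mem_coe.2 hmy.2.1) h2) h3))
        have ht : ((((Y ×ˢ Z).filter fun w => ¬ P a w.1 w.2) ×ˢ T).card : ℝ) ≤ B * k := by
          rw [card_product, hTcard]
          push_cast
          exact mul_le_mul_of_nonneg_right (hx a haX) hkR
        exact le_trans (Nat.cast_le.2 hc) ht
      have hBad2 : ((Pi3.filter (fun x => (x.1 ≠ x.2.1 ∧ x.1 ≠ x.2.2 ∧ x.2.1 ≠ x.2.2) ∧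
          ¬ P x.1.1 b x.2.2.2.2)).card : ℝ) ≤ B * k := by
        have hc := card_le_card_of_injOn (fun x => ((x.1.1, x.2.2.2.2), x.2.1))
          (s := Pi3.filter (fun x => (x.1 ≠ x.2.1 ∧ x.1 ≠ x.2.2 ∧ x.2.1 ≠ x.2.2) ∧
            ¬ P x.1.1 b x.2.2.2.2))
          (t := ((X ×ˢ Z).filter fun w => ¬ P w.1 b w.2) ×ˢ T)
          (by intro x hx
              have hm := hmemPi x (mem_of_mem_filter x hx)
              have hx' := (mem_filter.1 hx).2
              exact mem_product.2 ⟨mem_filter.2 ⟨mem_product.2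
                ⟨(hTmem _ hm.1).1, (hTmem _ hm.2.2).2.2.1⟩, hx'.2⟩, hm.2.1⟩)
          (by intro x hx y hy h
              simp only [coe_filter, Set.mem_setOf_eq] at hx hy
              have hmx := hmemPi x hx.1
              have hmy := hmemPi y hy.1
              simp only [Prod.mk.injEq] at h
              obtain ⟨⟨h1, h2⟩, h3⟩ := h
              exact Prod.ext (hinj1 (mem_coe.2 hmx.1) (mem_coe.2 hmy.1) h1)
                (Prod.ext h3 (hinj3 (mem_coe.2 hmx.2.2) (mem_coe.2 hmy.2.2) h2)))
        have ht : ((((X ×ˢ Z).filter fun w => ¬ P w.1 b w.2) ×ˢ T).card : ℝ) ≤ B * k := by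
          rw [card_product, hTcard]
          push_cast
          exact mul_le_mul_of_nonneg_right (hy b hbY) hkR
        exact le_trans (Nat.cast_le.2 hc) ht
      have hBad3 : ((Pi3.filter (fun x => (x.1 ≠ x.2.1 ∧ x.1 ≠ x.2.2 ∧ x.2.1 ≠ x.2.2) ∧
          ¬ P x.2.1.1 x.2.2.2.1 c)).card : ℝ) ≤ B * k := by
        have hc := card_le_card_of_injOn (fun x => ((x.2.1.1, x.2.2.2.1), x.1))
          (s := Pi3.filter (fun x => (x.1 ≠ x.2.1 ∧ x.1 ≠ x.2.2 ∧ x.2.1 ≠ x.2.2) ∧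
            ¬ P x.2.1.1 x.2.2.2.1 c))
          (t := ((X ×ˢ Y).filter fun w => ¬ P w.1 w.2 c) ×ˢ T)
          (by intro x hx
              have hm := hmemPi x (mem_of_mem_filter x hx)
              have hx' := (mem_filter.1 hx).2
              exact mem_product.2 ⟨mem_filter.2 ⟨mem_product.2
                ⟨(hTmem _ hm.2.1).1, (hTmem _ hm.2.2).2.1⟩, hx'.2⟩, hm.1⟩)
          (by intro x hx y hy h
              simp only [coe_filter, Set.mem_setOf_eq] at hx hy
              have hmx := hmemPi x hx.1
              have hmy := hmemPi y hy.1
              simp only [Prod.mk.injEq] at h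
              obtain ⟨⟨h1, h2⟩, h3⟩ := h
              exact Prod.ext h3
                (Prod.ext (hinj1 (mem_coe.2 hmx.2.1) (mem_coe.2 hmy.2.1) h1)
                  (hinj2 (mem_coe.2 hmx.2.2) (mem_coe.2 hmy.2.2) h2)))
        have ht : ((((X ×ˢ Y).filter fun w => ¬ P w.1 w.2 c) ×ˢ T).card : ℝ) ≤ B * k := by
          rw [card_product, hTcard]
          push_cast
          exact mul_le_mul_of_nonneg_right (hz c hcZ) hkR
        exact le_trans (Nat.cast_le.2 hc) ht
      have hBad4 : ((Pi3.filter (fun x => (x.1 ≠ x.2.1 ∧ x.1 ≠ x.2.2 ∧ x.2.1 ≠ x.2.2) ∧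
          ¬ P x.2.2.1 x.2.1.2.1 x.1.2.2)).card : ℝ) ≤ B * k := by
        have hWt : (((T ×ˢ (Y ×ˢ Z)).filter (fun w => ¬ P w.1.1 w.2.1 w.2.2)).card : ℝ)
            ≤ B * k := by
          set Wt := (T ×ˢ (Y ×ˢ Z)).filter (fun w => ¬ P w.1.1 w.2.1 w.2.2) with hWtdef
          have hfib : Wt.card = ∑ u ∈ T, (Wt.filter (fun w => w.1 = u)).card :=
            card_eq_sum_card_fiberwise
              (fun w hw => (mem_product.1 (mem_filter.1 hw).1).1)
          have hper : ∀ u ∈ T, ((Wt.filter (fun w => w.1 = u)).card : ℝ) ≤ B := by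
            intro u hu
            have hcc := card_le_card_of_injOn (fun w => w.2)
              (s := Wt.filter (fun w => w.1 = u))
              (t := (Y ×ˢ Z).filter (fun w => ¬ P u.1 w.1 w.2))
              (by intro w hw
                  have hw1 := mem_filter.1 hw
                  have hw2 := mem_filter.1 hw1.1
                  refine mem_filter.2 ⟨(mem_product.1 hw2.1).2, ?_⟩
                  rw [← hw1.2]
                  exact hw2.2)
              (by intro w hw w' hw' h
                  simp only [coe_filter, Set.mem_setOf_eq] at hw hw'
                  exact Prod.ext (hw.2.trans hw'.2.symm) h)
            exact le_trans (Nat.cast_le.2 hcc) (hx u.1 (hTmem u hu).1)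
          calc (Wt.card : ℝ) = ∑ u ∈ T, ((Wt.filter (fun w => w.1 = u)).card : ℝ) := by
                rw [hfib]; push_cast; ring
            _ ≤ ∑ _u ∈ T, B := sum_le_sum hper
            _ = B * k := by rw [sum_const, hTcard, nsmul_eq_mul]; ring
        have hc := card_le_card_of_injOn (fun x => (x.2.2, (x.2.1.2.1, x.1.2.2)))
          (s := Pi3.filter (fun x => (x.1 ≠ x.2.1 ∧ x.1 ≠ x.2.2 ∧ x.2.1 ≠ x.2.2) ∧
            ¬ P x.2.2.1 x.2.1.2.1 x.1.2.2))
          (t := (T ×ˢ (Y ×ˢ Z)).filter (fun w => ¬ P w.1.1 w.2.1 w.2.2))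
          (by intro x hx
              have hm := hmemPi x (mem_of_mem_filter x hx)
              have hx' := (mem_filter.1 hx).2
              exact mem_filter.2 ⟨mem_product.2 ⟨hm.2.2, mem_product.2
                ⟨(hTmem _ hm.2.1).2.1, (hTmem _ hm.1).2.2.1⟩⟩, hx'.2⟩)
          (by intro x hx y hy h
              simp only [coe_filter, Set.mem_setOf_eq] at hx hy
              have hmx := hmemPi x hx.1
              have hmy := hmemPi y hy.1
              simp only [Prod.mk.injEq] at h
              obtain ⟨h3, h1, h2⟩ := h
              exact Prod.ext (hinj3 (mem_coe.2 hmx.1) (mem_coe.2 hmy.1) h2)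
                (Prod.ext (hinj2 (mem_coe.2 hmx.2.1) (mem_coe.2 hmy.2.1) h1) h3))
        exact le_trans (Nat.cast_le.2 hc) hWt
      -- name the bad sets
      set Bad1 := Pi3.filter (fun x => (x.1 ≠ x.2.1 ∧ x.1 ≠ x.2.2 ∧ x.2.1 ≠ x.2.2) ∧
        ¬ P a x.1.2.1 x.2.1.2.2) with hBad1def
      set Bad2 := Pi3.filter (fun x => (x.1 ≠ x.2.1 ∧ x.1 ≠ x.2.2 ∧ x.2.1 ≠ x.2.2) ∧
        ¬ P x.1.1 b x.2.2.2.2) with hBad2def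
      set Bad3 := Pi3.filter (fun x => (x.1 ≠ x.2.1 ∧ x.1 ≠ x.2.2 ∧ x.2.1 ≠ x.2.2) ∧
        ¬ P x.2.1.1 x.2.2.2.1 c) with hBad3def
      set Bad4 := Pi3.filter (fun x => (x.1 ≠ x.2.1 ∧ x.1 ≠ x.2.2 ∧ x.2.1 ≠ x.2.2) ∧
        ¬ P x.2.2.1 x.2.1.2.1 x.1.2.2) with hBad4def
      set D := Pi3.filter (fun x => (x.1 ≠ x.2.1 ∧ x.1 ≠ x.2.2 ∧ x.2.1 ≠ x.2.2) ∧
        P a x.1.2.1 x.2.1.2.2 ∧ P x.1.1 b x.2.2.2.2 ∧ P x.2.1.1 x.2.2.2.1 c ∧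
        P x.2.2.1 x.2.1.2.1 x.1.2.2) with hDdef
      have hcover : Pi3.filter (fun x => x.1 ≠ x.2.1 ∧ x.1 ≠ x.2.2 ∧ x.2.1 ≠ x.2.2) ⊆
          D ∪ (Bad1 ∪ (Bad2 ∪ (Bad3 ∪ Bad4))) := by
        intro x hx
        have hx' := mem_filter.1 hx
        by_cases h1 : P a x.1.2.1 x.2.1.2.2
        · by_cases h2 : P x.1.1 b x.2.2.2.2
          · by_cases h3 : P x.2.1.1 x.2.2.2.1 c
            · by_cases h4 : P x.2.2.1 x.2.1.2.1 x.1.2.2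
              · exact mem_union_left _ (mem_filter.2 ⟨hx'.1, hx'.2, h1, h2, h3, h4⟩)
              · exact mem_union_right _ (mem_union_right _ (mem_union_right _
                  (mem_union_right _ (mem_filter.2 ⟨hx'.1, hx'.2, h4⟩))))
            · exact mem_union_right _ (mem_union_right _ (mem_union_right _
                (mem_union_left _ (mem_filter.2 ⟨hx'.1, hx'.2, h3⟩))))
          · exact mem_union_right _ (mem_union_right _
              (mem_union_left _ (mem_filter.2 ⟨hx'.1, hx'.2, h2⟩)))
        · exact mem_union_right _ (mem_union_left _ (mem_filter.2 ⟨hx'.1, hx'.2, h1⟩))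
      have hnat : (Pi3.filter (fun x => x.1 ≠ x.2.1 ∧ x.1 ≠ x.2.2 ∧ x.2.1 ≠ x.2.2)).card ≤
          D.card + (Bad1.card + (Bad2.card + (Bad3.card + Bad4.card))) := by
        calc (Pi3.filter (fun x => x.1 ≠ x.2.1 ∧ x.1 ≠ x.2.2 ∧ x.2.1 ≠ x.2.2)).card
            ≤ (D ∪ (Bad1 ∪ (Bad2 ∪ (Bad3 ∪ Bad4)))).card := card_le_card hcover
          _ ≤ D.card + (Bad1 ∪ (Bad2 ∪ (Bad3 ∪ Bad4))).card := card_union_le _ _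
          _ ≤ D.card + (Bad1.card + (Bad2 ∪ (Bad3 ∪ Bad4)).card) := by
              gcongr; exact card_union_le _ _
          _ ≤ D.card + (Bad1.card + (Bad2.card + (Bad3 ∪ Bad4).card)) := by
              gcongr; exact card_union_le _ _
          _ ≤ D.card + (Bad1.card + (Bad2.card + (Bad3.card + Bad4.card))) := by
              gcongr; exact card_union_le _ _
      have hdisc : (k : ℝ)^3 - 3 * k^2 ≤
          ((Pi3.filter (fun x => x.1 ≠ x.2.1 ∧ x.1 ≠ x.2.2 ∧ x.2.1 ≠ x.2.2)).card : ℝ) := by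
        have hsum := card_filter_add_card_filter_not (s := Pi3)
          (p := fun x => x.1 ≠ x.2.1 ∧ x.1 ≠ x.2.2 ∧ x.2.1 ≠ x.2.2)
        rw [hPic] at hsum
        have h2 : k ^ 3 ≤ (Pi3.filter (fun x => x.1 ≠ x.2.1 ∧ x.1 ≠ x.2.2 ∧ x.2.1 ≠ x.2.2)).card
            + 3 * k ^ 2 := by omega
        have h2' : ((k ^ 3 : ℕ) : ℝ) ≤
            ((Pi3.filter (fun x => x.1 ≠ x.2.1 ∧ x.1 ≠ x.2.2 ∧ x.2.1 ≠ x.2.2)).card : ℝ)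
            + ((3 * k ^ 2 : ℕ) : ℝ) := by exact_mod_cast h2
        push_cast at h2'
        linarith
      have hkpos : (0:ℝ) < (k:ℝ) := by
        have : (4:ℝ) ≤ (k:ℝ) := by exact_mod_cast hk4
        linarith
      have hDpos : 0 < D.card := by
        have hnat' : ((Pi3.filter (fun x => x.1 ≠ x.2.1 ∧ x.1 ≠ x.2.2 ∧ x.2.1 ≠ x.2.2)).card : ℝ)
            ≤ (D.card : ℝ) + ((Bad1.card : ℝ) + ((Bad2.card : ℝ) + ((Bad3.card : ℝ) + (Bad4.card : ℝ)))) := by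
          exact_mod_cast hnat
        have hmul : 4 * B * (k:ℝ) < (k:ℝ) * ((k:ℝ) - 3) * (k:ℝ) :=
          mul_lt_mul_of_pos_right h4B hkpos
        have : (0:ℝ) < (D.card : ℝ) := by nlinarith
        exact_mod_cast this
      obtain ⟨x, hxD⟩ := card_pos.1 hDpos
      obtain ⟨p, q, r⟩ := x
      have hxD' := mem_filter.1 hxD
      obtain ⟨hdis1, hC1, hC2, hC3, hC4⟩ := hxD'.2
      obtain ⟨hpT, hqT, hrT⟩ := hmemPi _ hxD'.1
      obtain ⟨hpq, hpr, hqr⟩ := hdis1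
      have dpq := hTdis p hpT q hqT hpq
      have dpr := hTdis p hpT r hrT hpr
      have dqr := hTdis q hqT r hrT hqr
      have hpX := hTmem p hpT
      have hqX := hTmem q hqT
      have hrX := hTmem r hrT
      have hold : ∀ s ∈ T \ ({p, q, r} : Finset (V × V × V)),
          s ∈ T ∧ s ≠ p ∧ s ≠ q ∧ s ≠ r := by
        intro s hs
        simp only [mem_sdiff, mem_insert, mem_singleton] at hs
        tauto
      have hc4 : (r.1, q.2.1, p.2.2) ∉ T \ ({p, q, r} : Finset (V × V × V)) := by
        intro h
        obtain ⟨hsT, hsp, hsq, hsr⟩ := hold _ h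
        exact (hTdis _ hsT r hrT hsr).1 rfl
      have hc3 : (q.1, r.2.1, c) ∉
          insert (r.1, q.2.1, p.2.2) (T \ ({p, q, r} : Finset (V × V × V))) := by
        intro h
        rcases mem_insert.1 h with heq | h
        · have h5 := congrArg Prod.fst heq
          exact dqr.1 h5
        · obtain ⟨hsT, _, _, _⟩ := hold _ h
          exact hcT _ hsT rfl
      have hc2 : (p.1, b, r.2.2) ∉ insert (q.1, r.2.1, c)
          (insert (r.1, q.2.1, p.2.2) (T \ ({p, q, r} : Finset (V × V × V)))) := by
        intro h
        rcases mem_insert.1 h with heq | h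
        · have h5 := congrArg Prod.fst heq
          exact dpq.1 h5
        rcases mem_insert.1 h with heq | h
        · have h5 := congrArg Prod.fst heq
          exact dpr.1 h5
        · obtain ⟨hsT, _, _, _⟩ := hold _ h
          exact hbT _ hsT rfl
      have hc1 : (a, p.2.1, q.2.2) ∉ insert (p.1, b, r.2.2) (insert (q.1, r.2.1, c)
          (insert (r.1, q.2.1, p.2.2) (T \ ({p, q, r} : Finset (V × V × V))))) := by
        intro h
        rcases mem_insert.1 h with heq | h
        · have h5 := congrArg Prod.fst heq
          exact haT p hpT h5.symm
        rcases mem_insert.1 h with heq | h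
        · have h5 := congrArg Prod.fst heq
          exact haT q hqT h5.symm
        rcases mem_insert.1 h with heq | h
        · have h5 := congrArg Prod.fst heq
          exact haT r hrT h5.symm
        · obtain ⟨hsT, _, _, _⟩ := hold _ h
          exact haT _ hsT rfl
      have hsub3 : ({p, q, r} : Finset (V × V × V)) ⊆ T := by
        intro s hs
        rcases mem_insert.1 hs with rfl | hs
        · exact hpT
        rcases mem_insert.1 hs with rfl | hs
        · exact hqT
        · exact (mem_singleton.1 hs) ▸ hrT
      have hcard3 : ({p, q, r} : Finset (V × V × V)).card = 3 := by
        rw [card_insert_of_notMem (by simp [hpq, hpr]),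
          card_insert_of_notMem (by simp [hqr]), card_singleton]
      refine ⟨insert (a, p.2.1, q.2.2) (insert (p.1, b, r.2.2) (insert (q.1, r.2.1, c)
        (insert (r.1, q.2.1, p.2.2) (T \ ({p, q, r} : Finset (V × V × V)))))), ?_, ?_, ?_⟩
      · rw [card_insert_of_notMem hc1, card_insert_of_notMem hc2,
          card_insert_of_notMem hc3, card_insert_of_notMem hc4,
          card_sdiff_of_subset hsub3, hcard3, hTcard]
        omega
      · intro s hs
        rcases mem_insert.1 hs with rfl | hs
        · exact ⟨haX, hpX.2.1, hqX.2.2.1, hC1⟩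
        rcases mem_insert.1 hs with rfl | hs
        · exact ⟨hpX.1, hbY, hrX.2.2.1, hC2⟩
        rcases mem_insert.1 hs with rfl | hs
        · exact ⟨hqX.1, hrX.2.1, hcZ, hC3⟩
        rcases mem_insert.1 hs with rfl | hs
        · exact ⟨hrX.1, hqX.2.1, hpX.2.2.1, hC4⟩
        · exact hTmem s (hold _ hs).1
      · intro s hs s' hs' hne
        have mem5 : ∀ u, u ∈ insert (a, p.2.1, q.2.2) (insert (p.1, b, r.2.2)
            (insert (q.1, r.2.1, c) (insert (r.1, q.2.1, p.2.2)
            (T \ ({p, q, r} : Finset (V × V × V)))))) →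
            u = (a, p.2.1, q.2.2) ∨ u = (p.1, b, r.2.2) ∨ u = (q.1, r.2.1, c) ∨
            u = (r.1, q.2.1, p.2.2) ∨ (u ∈ T ∧ u ≠ p ∧ u ≠ q ∧ u ≠ r) := by
          intro u hu
          rcases mem_insert.1 hu with rfl | hu
          · exact Or.inl rfl
          rcases mem_insert.1 hu with rfl | hu
          · exact Or.inr (Or.inl rfl)
          rcases mem_insert.1 hu with rfl | hu
          · exact Or.inr (Or.inr (Or.inl rfl))
          rcases mem_insert.1 hu with rfl | hu
          · exact Or.inr (Or.inr (Or.inr (Or.inl rfl)))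
          · exact Or.inr (Or.inr (Or.inr (Or.inr (hold _ hu))))
        rcases mem5 s hs with rfl | rfl | rfl | rfl | ⟨hsT, hsp, hsq, hsr⟩ <;>
          rcases mem5 s' hs' with rfl | rfl | rfl | rfl | ⟨hs'T, hs'p, hs'q, hs'r⟩
        · exact absurd rfl hne
        · exact ⟨Ne.symm (haT p hpT), hbT p hpT, dqr.2.2⟩
        · exact ⟨Ne.symm (haT q hqT), dpr.2.1, hcT q hqT⟩
        · exact ⟨Ne.symm (haT r hrT), dpq.2.1, Ne.symm dpq.2.2⟩
        · exact ⟨Ne.symm (haT s' hs'T), (hTdis p hpT s' hs'T (Ne.symm hs'p)).2.1,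
            (hTdis q hqT s' hs'T (Ne.symm hs'q)).2.2⟩
        · exact ⟨haT p hpT, Ne.symm (hbT p hpT), Ne.symm dqr.2.2⟩
        · exact absurd rfl hne
        · exact ⟨dpq.1, Ne.symm (hbT r hrT), hcT r hrT⟩
        · exact ⟨dpr.1, Ne.symm (hbT q hqT), Ne.symm dpr.2.2⟩
        · exact ⟨(hTdis p hpT s' hs'T (Ne.symm hs'p)).1, Ne.symm (hbT s' hs'T),
            (hTdis r hrT s' hs'T (Ne.symm hs'r)).2.2⟩
        · exact ⟨haT q hqT, Ne.symm dpr.2.1, Ne.symm (hcT q hqT)⟩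
        · exact ⟨Ne.symm dpq.1, hbT r hrT, Ne.symm (hcT r hrT)⟩
        · exact absurd rfl hne
        · exact ⟨dqr.1, Ne.symm dqr.2.1, Ne.symm (hcT p hpT)⟩
        · exact ⟨(hTdis q hqT s' hs'T (Ne.symm hs'q)).1,
            (hTdis r hrT s' hs'T (Ne.symm hs'r)).2.1, Ne.symm (hcT s' hs'T)⟩
        · exact ⟨haT r hrT, Ne.symm dpq.2.1, dpq.2.2⟩
        · exact ⟨Ne.symm dpr.1, hbT q hqT, dpr.2.2⟩
        · exact ⟨Ne.symm dqr.1, dqr.2.1, hcT p hpT⟩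
        · exact absurd rfl hne
        · exact ⟨(hTdis r hrT s' hs'T (Ne.symm hs'r)).1,
            (hTdis q hqT s' hs'T (Ne.symm hs'q)).2.1,
            (hTdis p hpT s' hs'T (Ne.symm hs'p)).2.2⟩
        · exact ⟨haT s hsT, (hTdis s hsT p hpT hsp).2.1, (hTdis s hsT q hqT hsq).2.2⟩
        · exact ⟨(hTdis s hsT p hpT hsp).1, hbT s hsT, (hTdis s hsT r hrT hsr).2.2⟩
        · exact ⟨(hTdis s hsT q hqT hsq).1, (hTdis s hsT r hrT hsr).2.1, hcT s hsT⟩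
        · exact ⟨(hTdis s hsT r hrT hsr).1, (hTdis s hsT q hqT hsq).2.1,
            (hTdis s hsT p hpT hsp).2.2⟩
        · exact hTdis s hsT s' hs'T hne
    · -- direct extension
      push_neg at hcase
      have hbadsub : (Yu ×ˢ Zu).filter (fun w => ¬ P a w.1 w.2) ⊆
          (Y ×ˢ Z).filter (fun w => ¬ P a w.1 w.2) :=
        filter_subset_filter _ (product_subset_product (sdiff_subset) (sdiff_subset))
      have hbad : (((Yu ×ˢ Zu).filter (fun w => ¬ P a w.1 w.2)).card : ℝ) ≤ B :=
        le_trans (Nat.cast_le.2 (card_le_card hbadsub)) (hx a haX)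
      have hprod : (((Yu ×ˢ Zu)).card : ℝ) = ((m : ℝ) - k)^2 := by
        rw [card_product, hYuc, hZuc]
        push_cast [Nat.cast_sub hkm.le]
        ring
      have hgoodne : ((Yu ×ˢ Zu).filter (fun w => P a w.1 w.2)).Nonempty := by
        rw [← card_pos]
        by_contra h
        push_neg at h
        have h0 : ((Yu ×ˢ Zu).filter (fun w => P a w.1 w.2)).card = 0 := Nat.le_zero.1 h
        have := card_filter_add_card_filter_not (s := Yu ×ˢ Zu) (p := fun w => P a w.1 w.2)
        rw [h0, zero_add] at this
        rw [← this] at hprod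
        exact absurd (hprod ▸ hbad) (not_le.2 hcase)
      obtain ⟨⟨y, z⟩, hyz⟩ := hgoodne
      have hymem := mem_filter.1 hyz
      have hyY := (mem_product.1 hymem.1).1
      have hzZ := (mem_product.1 hymem.1).2
      refine ⟨insert (a, y, z) T, ?_, ?_, ?_⟩
      · rw [card_insert_of_notMem (fun h => haT _ h rfl), hTcard]
      · intro p hp
        rcases mem_insert.1 hp with rfl | hp
        · exact ⟨haX, (mem_sdiff.1 hyY).1, (mem_sdiff.1 hzZ).1, hymem.2⟩
        · exact hTmem p hp
      · intro p hp q hq hne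
        have key : ∀ p ∈ T, p.1 ≠ a ∧ p.2.1 ≠ y ∧ p.2.2 ≠ z := by
          intro p hp
          refine ⟨haT p hp, ?_, ?_⟩
          · intro h; exact (mem_sdiff.1 hyY).2 (mem_image.2 ⟨p, hp, h⟩)
          · intro h; exact (mem_sdiff.1 hzZ).2 (mem_image.2 ⟨p, hp, h⟩)
        rcases mem_insert.1 hp with rfl | hp <;> rcases mem_insert.1 hq with rfl | hq
        · exact absurd rfl hne
        · have := key q hq
          exact ⟨fun h => this.1 h.symm, fun h => this.2.1 h.symm, fun h => this.2.2 h.symm⟩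
        · exact key p hp
        · exact hTdis p hp q hq hne

end Dirac

/-- Let `0 < α < 2⁻⁸`, `n ≥ 10` and `d₁,d₂,d₃ ≥ 5n/16` with `d₁+d₂+d₃ = n`. If every
vertex of the 3-partite 3-graph `H` is `α`-good with respect to `H'(n;d₁,d₂,d₃)`
(i.e. at most `α·n²` pairs in its link in `H'(n;d₁,d₂,d₃)` are missing from its link in
`H`), then `H` contains a perfect matching. -/
theorem perfect_matching_of_alpha_good (n : ℕ) (hn : 10 ≤ n) (α : ℝ)
    (hα0 : 0 < α) (hα1 : α < 2 ^ (-8 : ℤ)) (d : Fin 3 → ℕ)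
    (hd : ∀ i, (5 : ℝ) * n / 16 ≤ d i) (hsum : d 0 + d 1 + d 2 = n)
    (H : Finset (Fin 3 → Fin n))
    (hgood : ∀ (c : Fin 3) (x : Fin n),
      ((((H'nd n d).filter (fun e => e c = x)) \ H).card : ℝ) ≤ α * n ^ 2) :
    ∃ M : Finset (Fin 3 → Fin n), M ⊆ H ∧
      (∀ e ∈ M, ∀ f ∈ M, e ≠ f → ∀ i, e i ≠ f i) ∧ M.card = n := by
  classical
  set P : Fin n → Fin n → Fin n → Prop := fun x y z => (![x, y, z] ∈ H) with hP
  -- instance 1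
  obtain ⟨T1, hT1card, hT1mem, hT1dis⟩ := dirac (Iv n 0 (d 0)) (Iv n (d 1) (d 1 + d 0))
    (Iv n (d 2) (d 2 + d 0)) (d 0)
    (by rw [Iv_card (by omega)]; omega)
    (by rw [Iv_card (by omega)]; omega)
    (by rw [Iv_card (by omega)]; omega)
    P (α * n ^ 2)
    (by
      intro a ha
      refine bad_le hgood 0 a _ (fun w => ![a, w.1, w.2]) ?_ ?_
      · intro q hq
        have h1 := mem_Iv.1 (mem_product.1 hq).1
        have h2 := mem_Iv.1 (mem_product.1 hq).2
        have ha' := mem_Iv.1 ha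
        constructor
        · refine H'nd_mem_of 0 (by simpa using ha'.2) ?_
          intro j hj
          fin_cases j
          · exact absurd rfl hj
          · simpa using h1.1
          · simpa using h2.1
        · rfl
      · intro q _ q' _ h
        have e1 := congrFun h 1
        have e2 := congrFun h 2
        simp only [Matrix.cons_val_one, Matrix.head_cons] at e1
        have e2' : q.2 = q'.2 := by simpa using e2
        exact Prod.ext e1 e2')
    (by
      intro b hb
      refine bad_le hgood 1 b _ (fun w => ![w.1, b, w.2]) ?_ ?_
      · intro q hq
        have h1 := mem_Iv.1 (mem_product.1 hq).1
        have h2 := mem_Iv.1 (mem_product.1 hq).2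
        have hb' := mem_Iv.1 hb
        constructor
        · refine H'nd_mem_of 0 (by simpa using h1.2) ?_
          intro j hj
          fin_cases j
          · exact absurd rfl hj
          · simpa using hb'.1
          · simpa using h2.1
        · rfl
      · intro q _ q' _ h
        have e1 := congrFun h 0
        have e2 := congrFun h 2
        have e1' : q.1 = q'.1 := by simpa using e1
        have e2' : q.2 = q'.2 := by simpa using e2
        exact Prod.ext e1' e2')
    (by
      intro c hc
      refine bad_le hgood 2 c _ (fun w => ![w.1, w.2, c]) ?_ ?_
      · intro q hq
        have h1 := mem_Iv.1 (mem_product.1 hq).1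
        have h2 := mem_Iv.1 (mem_product.1 hq).2
        have hc' := mem_Iv.1 hc
        constructor
        · refine H'nd_mem_of 0 (by simpa using h1.2) ?_
          intro j hj
          fin_cases j
          · exact absurd rfl hj
          · simpa using h2.1
          · simpa using hc'.1
        · rfl
      · intro q _ q' _ h
        have e1 := congrFun h 0
        have e2 := congrFun h 1
        have e1' : q.1 = q'.1 := by simpa using e1
        have e2' : q.2 = q'.2 := by simpa using e2
        exact Prod.ext e1' e2')
    (harith_gen hα0 hα1 (hd 0))
  -- instance 2
  obtain ⟨T2, hT2card, hT2mem, hT2dis⟩ := dirac (Iv n (d 0) (d 0 + d 1)) (Iv n 0 (d 1))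
    (Iv n (d 2 + d 0) n) (d 1)
    (by rw [Iv_card (by omega)]; omega)
    (by rw [Iv_card (by omega)]; omega)
    (by rw [Iv_card (by omega)]; omega)
    P (α * n ^ 2)
    (by
      intro a ha
      refine bad_le hgood 0 a _ (fun w => ![a, w.1, w.2]) ?_ ?_
      · intro q hq
        have h1 := mem_Iv.1 (mem_product.1 hq).1
        have h2 := mem_Iv.1 (mem_product.1 hq).2
        have ha' := mem_Iv.1 ha
        constructor
        · refine H'nd_mem_of 1 (by simpa using h1.2) ?_
          intro j hj
          fin_cases j
          · simpa using ha'.1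
          · exact absurd rfl hj
          · have := h2.1
            simp
            omega
        · rfl
      · intro q _ q' _ h
        have e1 := congrFun h 1
        have e2 := congrFun h 2
        have e1' : q.1 = q'.1 := by simpa using e1
        have e2' : q.2 = q'.2 := by simpa using e2
        exact Prod.ext e1' e2')
    (by
      intro b hb
      refine bad_le hgood 1 b _ (fun w => ![w.1, b, w.2]) ?_ ?_
      · intro q hq
        have h1 := mem_Iv.1 (mem_product.1 hq).1
        have h2 := mem_Iv.1 (mem_product.1 hq).2
        have hb' := mem_Iv.1 hb
        constructor
        · refine H'nd_mem_of 1 (by simpa using hb'.2) ?_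
          intro j hj
          fin_cases j
          · simpa using h1.1
          · exact absurd rfl hj
          · have := h2.1
            simp
            omega
        · rfl
      · intro q _ q' _ h
        have e1 := congrFun h 0
        have e2 := congrFun h 2
        have e1' : q.1 = q'.1 := by simpa using e1
        have e2' : q.2 = q'.2 := by simpa using e2
        exact Prod.ext e1' e2')
    (by
      intro c hc
      refine bad_le hgood 2 c _ (fun w => ![w.1, w.2, c]) ?_ ?_
      · intro q hq
        have h1 := mem_Iv.1 (mem_product.1 hq).1
        have h2 := mem_Iv.1 (mem_product.1 hq).2
        have hc' := mem_Iv.1 hc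
        constructor
        · refine H'nd_mem_of 1 (by simpa using h2.2) ?_
          intro j hj
          fin_cases j
          · simpa using h1.1
          · exact absurd rfl hj
          · have := hc'.1
            simp
            omega
        · rfl
      · intro q _ q' _ h
        have e1 := congrFun h 0
        have e2 := congrFun h 1
        have e1' : q.1 = q'.1 := by simpa using e1
        have e2' : q.2 = q'.2 := by simpa using e2
        exact Prod.ext e1' e2')
    (harith_gen hα0 hα1 (hd 1))
  -- instance 3
  obtain ⟨T3, hT3card, hT3mem, hT3dis⟩ := dirac (Iv n (d 0 + d 1) n) (Iv n (d 1 + d 0) n)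
    (Iv n 0 (d 2)) (d 2)
    (by rw [Iv_card (by omega)]; omega)
    (by rw [Iv_card (by omega)]; omega)
    (by rw [Iv_card (by omega)]; omega)
    P (α * n ^ 2)
    (by
      intro a ha
      refine bad_le hgood 0 a _ (fun w => ![a, w.1, w.2]) ?_ ?_
      · intro q hq
        have h1 := mem_Iv.1 (mem_product.1 hq).1
        have h2 := mem_Iv.1 (mem_product.1 hq).2
        have ha' := mem_Iv.1 ha
        constructor
        · refine H'nd_mem_of 2 (by simpa using h2.2) ?_
          intro j hj
          fin_cases j
          · have := ha'.1
            simp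
            omega
          · have := h1.1
            simp
            omega
          · exact absurd rfl hj
        · rfl
      · intro q _ q' _ h
        have e1 := congrFun h 1
        have e2 := congrFun h 2
        have e1' : q.1 = q'.1 := by simpa using e1
        have e2' : q.2 = q'.2 := by simpa using e2
        exact Prod.ext e1' e2')
    (by
      intro b hb
      refine bad_le hgood 1 b _ (fun w => ![w.1, b, w.2]) ?_ ?_
      · intro q hq
        have h1 := mem_Iv.1 (mem_product.1 hq).1
        have h2 := mem_Iv.1 (mem_product.1 hq).2
        have hb' := mem_Iv.1 hb
        constructor
        · refine H'nd_mem_of 2 (by simpa using h2.2) ?_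
          intro j hj
          fin_cases j
          · have := h1.1
            simp
            omega
          · have := hb'.1
            simp
            omega
          · exact absurd rfl hj
        · rfl
      · intro q _ q' _ h
        have e1 := congrFun h 0
        have e2 := congrFun h 2
        have e1' : q.1 = q'.1 := by simpa using e1
        have e2' : q.2 = q'.2 := by simpa using e2
        exact Prod.ext e1' e2')
    (by
      intro c hc
      refine bad_le hgood 2 c _ (fun w => ![w.1, w.2, c]) ?_ ?_
      · intro q hq
        have h1 := mem_Iv.1 (mem_product.1 hq).1
        have h2 := mem_Iv.1 (mem_product.1 hq).2
        have hc' := mem_Iv.1 hc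
        constructor
        · refine H'nd_mem_of 2 (by simpa using hc'.2) ?_
          intro j hj
          fin_cases j
          · have := h1.1
            simp
            omega
          · have := h2.1
            simp
            omega
          · exact absurd rfl hj
        · rfl
      · intro q _ q' _ h
        have e1 := congrFun h 0
        have e2 := congrFun h 1
        have e1' : q.1 = q'.1 := by simpa using e1
        have e2' : q.2 = q'.2 := by simpa using e2
        exact Prod.ext e1' e2')
    (harith_gen hα0 hα1 (hd 2))
  -- assemble the perfect matching
  have hFinj : Function.Injective (fun t : Fin n × Fin n × Fin n => (![t.1, t.2.1, t.2.2] : Fin 3 → Fin n)) := by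
    intro t t' h
    have e0 : t.1 = t'.1 := congrFun h 0
    have e1 : t.2.1 = t'.2.1 := congrFun h 1
    have e2 : t.2.2 = t'.2.2 := congrFun h 2
    exact Prod.ext e0 (Prod.ext e1 e2)
  have hmem1 : ∀ e ∈ T1.image (fun t : Fin n × Fin n × Fin n => (![t.1, t.2.1, t.2.2] : Fin 3 → Fin n)),
      ((e 0 : ℕ) < d 0) ∧ (d 1 ≤ (e 1 : ℕ) ∧ (e 1 : ℕ) < d 1 + d 0) ∧
      (d 2 ≤ (e 2 : ℕ) ∧ (e 2 : ℕ) < d 2 + d 0) ∧ e ∈ H := by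
    intro e he
    obtain ⟨t, ht, rfl⟩ := mem_image.1 he
    obtain ⟨hx, hy, hz, hp⟩ := hT1mem t ht
    exact ⟨(mem_Iv.1 hx).2, ⟨(mem_Iv.1 hy).1, (mem_Iv.1 hy).2⟩,
      ⟨(mem_Iv.1 hz).1, (mem_Iv.1 hz).2⟩, hp⟩
  have hmem2 : ∀ e ∈ T2.image (fun t : Fin n × Fin n × Fin n => (![t.1, t.2.1, t.2.2] : Fin 3 → Fin n)),
      (d 0 ≤ (e 0 : ℕ) ∧ (e 0 : ℕ) < d 0 + d 1) ∧ ((e 1 : ℕ) < d 1) ∧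
      (d 2 + d 0 ≤ (e 2 : ℕ)) ∧ e ∈ H := by
    intro e he
    obtain ⟨t, ht, rfl⟩ := mem_image.1 he
    obtain ⟨hx, hy, hz, hp⟩ := hT2mem t ht
    exact ⟨⟨(mem_Iv.1 hx).1, (mem_Iv.1 hx).2⟩, (mem_Iv.1 hy).2, (mem_Iv.1 hz).1, hp⟩
  have hmem3 : ∀ e ∈ T3.image (fun t : Fin n × Fin n × Fin n => (![t.1, t.2.1, t.2.2] : Fin 3 → Fin n)),
      (d 0 + d 1 ≤ (e 0 : ℕ)) ∧ (d 1 + d 0 ≤ (e 1 : ℕ)) ∧ ((e 2 : ℕ) < d 2) ∧ e ∈ H := by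
    intro e he
    obtain ⟨t, ht, rfl⟩ := mem_image.1 he
    obtain ⟨hx, hy, hz, hp⟩ := hT3mem t ht
    exact ⟨(mem_Iv.1 hx).1, (mem_Iv.1 hy).1, (mem_Iv.1 hz).2, hp⟩
  refine ⟨(T1.image (fun t : Fin n × Fin n × Fin n => (![t.1, t.2.1, t.2.2] : Fin 3 → Fin n))) ∪
    ((T2.image (fun t : Fin n × Fin n × Fin n => (![t.1, t.2.1, t.2.2] : Fin 3 → Fin n))) ∪
     (T3.image (fun t : Fin n × Fin n × Fin n => (![t.1, t.2.1, t.2.2] : Fin 3 → Fin n)))), ?_, ?_, ?_⟩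
  · intro e he
    rcases mem_union.1 he with he | he
    · exact (hmem1 e he).2.2.2
    rcases mem_union.1 he with he | he
    · exact (hmem2 e he).2.2.2
    · exact (hmem3 e he).2.2.2
  · intro e he f hf hne
    rcases mem_union.1 he with he | he <;>
      [skip; rcases mem_union.1 he with he | he] <;>
      (rcases mem_union.1 hf with hf | hf <;> [skip; rcases mem_union.1 hf with hf | hf])
    · -- both in T1
      obtain ⟨t, ht, rfl⟩ := mem_image.1 he
      obtain ⟨t', ht', rfl⟩ := mem_image.1 hf
      have htne : t ≠ t' := fun h => hne (by rw [h])
      have dis := hT1dis t ht t' ht' htne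
      intro i
      fin_cases i
      · exact fun h => dis.1 h
      · exact fun h => dis.2.1 h
      · exact fun h => dis.2.2 h
    · -- T1 vs T2
      have A := hmem1 _ he
      have B := hmem2 _ hf
      intro i
      have h0 : e 0 ≠ f 0 := by
        intro h
        have hv := congrArg Fin.val h
        omega
      have h1 : e 1 ≠ f 1 := by
        intro h
        have hv := congrArg Fin.val h
        omega
      have h2 : e 2 ≠ f 2 := by
        intro h
        have hv := congrArg Fin.val h
        omega
      fin_cases i
      · exact h0
      · exact h1
      · exact h2
    · have A := hmem1 _ he
      have B := hmem3 _ hf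
      intro i
      have h0 : e 0 ≠ f 0 := by
        intro h
        have hv := congrArg Fin.val h
        omega
      have h1 : e 1 ≠ f 1 := by
        intro h
        have hv := congrArg Fin.val h
        omega
      have h2 : e 2 ≠ f 2 := by
        intro h
        have hv := congrArg Fin.val h
        omega
      fin_cases i
      · exact h0
      · exact h1
      · exact h2
    · have A := hmem2 _ he
      have B := hmem1 _ hf
      intro i
      have h0 : e 0 ≠ f 0 := by
        intro h
        have hv := congrArg Fin.val h
        omega
      have h1 : e 1 ≠ f 1 := by
        intro h
        have hv := congrArg Fin.val h
        omega
      have h2 : e 2 ≠ f 2 := by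
        intro h
        have hv := congrArg Fin.val h
        omega
      fin_cases i
      · exact h0
      · exact h1
      · exact h2
    · obtain ⟨t, ht, rfl⟩ := mem_image.1 he
      obtain ⟨t', ht', rfl⟩ := mem_image.1 hf
      have htne : t ≠ t' := fun h => hne (by rw [h])
      have dis := hT2dis t ht t' ht' htne
      intro i
      fin_cases i
      · exact fun h => dis.1 h
      · exact fun h => dis.2.1 h
      · exact fun h => dis.2.2 h
    · have A := hmem2 _ he
      have B := hmem3 _ hf
      intro i
      have h0 : e 0 ≠ f 0 := by
        intro h
        have hv := congrArg Fin.val h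
        omega
      have h1 : e 1 ≠ f 1 := by
        intro h
        have hv := congrArg Fin.val h
        omega
      have h2 : e 2 ≠ f 2 := by
        intro h
        have hv := congrArg Fin.val h
        omega
      fin_cases i
      · exact h0
      · exact h1
      · exact h2
    · have A := hmem3 _ he
      have B := hmem1 _ hf
      intro i
      have h0 : e 0 ≠ f 0 := by
        intro h
        have hv := congrArg Fin.val h
        omega
      have h1 : e 1 ≠ f 1 := by
        intro h
        have hv := congrArg Fin.val h
        omega
      have h2 : e 2 ≠ f 2 := by
        intro h
        have hv := congrArg Fin.val h
        omega
      fin_cases i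
      · exact h0
      · exact h1
      · exact h2
    · have A := hmem3 _ he
      have B := hmem2 _ hf
      intro i
      have h0 : e 0 ≠ f 0 := by
        intro h
        have hv := congrArg Fin.val h
        omega
      have h1 : e 1 ≠ f 1 := by
        intro h
        have hv := congrArg Fin.val h
        omega
      have h2 : e 2 ≠ f 2 := by
        intro h
        have hv := congrArg Fin.val h
        omega
      fin_cases i
      · exact h0
      · exact h1
      · exact h2
    · obtain ⟨t, ht, rfl⟩ := mem_image.1 he
      obtain ⟨t', ht', rfl⟩ := mem_image.1 hf
      have htne : t ≠ t' := fun h => hne (by rw [h])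
      have dis := hT3dis t ht t' ht' htne
      intro i
      fin_cases i
      · exact fun h => dis.1 h
      · exact fun h => dis.2.1 h
      · exact fun h => dis.2.2 h
  · -- cardinality
    have hd23 : Disjoint (T2.image (fun t : Fin n × Fin n × Fin n => (![t.1, t.2.1, t.2.2] : Fin 3 → Fin n)))
        (T3.image (fun t : Fin n × Fin n × Fin n => (![t.1, t.2.1, t.2.2] : Fin 3 → Fin n))) := by
      rw [disjoint_left]
      intro e he2 he3
      have A := hmem2 _ he2
      have B := hmem3 _ he3
      omega
    have hd123 : Disjoint (T1.image (fun t : Fin n × Fin n × Fin n => (![t.1, t.2.1, t.2.2] : Fin 3 → Fin n)))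
        ((T2.image (fun t : Fin n × Fin n × Fin n => (![t.1, t.2.1, t.2.2] : Fin 3 → Fin n))) ∪
         (T3.image (fun t : Fin n × Fin n × Fin n => (![t.1, t.2.1, t.2.2] : Fin 3 → Fin n)))) := by
      rw [disjoint_left]
      intro e he1 he
      have A := hmem1 _ he1
      rcases mem_union.1 he with he | he
      · have B := hmem2 _ he
        omega
      · have B := hmem3 _ he
        omega
    rw [card_union_of_disjoint hd123, card_union_of_disjoint hd23,
      card_image_of_injective _ hFinj, card_image_of_injective _ hFinj,
      card_image_of_injective _ hFinj, hT1card, hT2card, hT3card]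
    omega
end
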